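/- arXiv:1706.07125 — 7 statements merged into one kernel-verified Lean document; each statement's English description precedes it below -/
import Mathlib

section
/- Let F : [0,∞) → [0,∞) be a bounded nonnegative function and c > 0 a constant such that for all λ ≥ 0, F(λ) ≤ (1/c) ∫₀¹ ∫₀^λ F(u·s) ds du. Then F is identically zero. -/
open MeasureTheory intervalIntegral

-- Key step: if F vanishes on [0, r], it vanishes on [0, r + c/2].
lemma step_aux (F : ℝ → ℝ) (c C : ℝ) (hc : 0 < c) (hC : 0 ≤ C)
    (hF_nonneg : ∀ l, 0 ≤ l → 0 ≤ F l)
    (hF_bdd : ∀ l, 0 ≤ l → F l ≤ C)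
    (hF : ∀ l, 0 ≤ l →
      F l ≤ (1 / c) * ∫ u in (0:ℝ)..1, ∫ s in (0:ℝ)..l, F (u * s))
    (r : ℝ) (hr : 0 ≤ r) (h0 : ∀ x, 0 ≤ x → x ≤ r → F x = 0) :
    ∀ l, 0 ≤ l → l ≤ r + c / 2 → F l = 0 := by
  have key : ∀ n : ℕ, ∀ l, 0 ≤ l → F l ≤ C * ((max (l - r) 0) / c) ^ n := by
    intro n
    induction n with
    | zero => intro l hl; simpa using hF_bdd l hl
    | succ n ih =>
      intro l hl
      have hmax_nonneg : 0 ≤ max (l - r) 0 / c := div_nonneg (le_max_right _ _) hc.le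
      rcases le_or_gt l r with hlr | hlr
      · rw [h0 l hl hlr]; exact mul_nonneg hC (pow_nonneg hmax_nonneg _)
      -- l > r
      have hmax : max (l - r) 0 = l - r := max_eq_left (by linarith)
      set D : ℝ := C * ((l - r) / c) ^ n with hD
      have hD_nonneg : 0 ≤ D :=
        mul_nonneg hC (pow_nonneg (div_nonneg (by linarith) hc.le) n)
      -- bound the inner integral for each u ∈ Ioc 0 1
      have inner_bound : ∀ u ∈ Set.uIoc (0:ℝ) 1,
          ‖∫ s in (0:ℝ)..l, F (u * s)‖ ≤ D * (l - r) := by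
        intro u hu
        rw [Set.uIoc_of_le (by norm_num : (0:ℝ) ≤ 1)] at hu
        obtain ⟨hu0, hu1⟩ := hu
        set a : ℝ := min (r / u) l with ha
        have ha_nonneg : 0 ≤ a := le_min (by positivity) hl
        have har : r ≤ a := le_min (by
          rw [le_div_iff₀ hu0]; nlinarith) (le_of_lt hlr)
        have hal : a ≤ l := min_le_right _ _
        have heq : (∫ s in (0:ℝ)..l, F (u * s))
            = ∫ s in Set.Ioc a l, F (u * s) := by
          rw [intervalIntegral.integral_of_le hl]
          have h1 : ∀ s ∈ Set.Ioc (0:ℝ) l,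
              F (u * s) = (Set.Ioc a l).indicator (fun s => F (u * s)) s := by
            intro s hs
            by_cases hsa : a < s
            · rw [Set.indicator_of_mem (Set.mem_Ioc.mpr ⟨hsa, hs.2⟩)]
            · push_neg at hsa
              rw [Set.indicator_of_notMem (by simp [Set.mem_Ioc]; intro h; linarith)]
              apply h0
              · exact mul_nonneg hu0.le hs.1.le
              · have hsr : s ≤ r / u := le_trans hsa (min_le_left _ _)
                calc u * s ≤ u * (r / u) := by
                      apply mul_le_mul_of_nonneg_left hsr (le_of_lt hu0)
                  _ = r := by field_simp
          rw [setIntegral_congr_fun measurableSet_Ioc h1,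
            setIntegral_indicator measurableSet_Ioc]
          rw [Set.Ioc_inter_Ioc, max_eq_right ha_nonneg, min_self]
        rw [heq]
        have hbound : ‖∫ s in Set.Ioc a l, F (u * s)‖
            ≤ D * (volume (Set.Ioc a l)).toReal := by
          apply norm_setIntegral_le_of_norm_le_const_ae'
          · rw [Real.volume_Ioc]; exact ENNReal.ofReal_lt_top
          · filter_upwards with s hs
            have hus_nonneg : 0 ≤ u * s := by
              have : 0 < s := lt_of_le_of_lt ha_nonneg hs.1
              positivity
            have hus_le : u * s ≤ l := by nlinarith [hs.1, hs.2, lt_of_le_of_lt ha_nonneg hs.1]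
            rw [Real.norm_eq_abs, abs_of_nonneg (hF_nonneg _ hus_nonneg)]
            calc F (u * s) ≤ C * ((max (u * s - r) 0) / c) ^ n := ih _ hus_nonneg
              _ ≤ D := by
                  apply mul_le_mul_of_nonneg_left _ hC
                  apply pow_le_pow_left₀ (by positivity)
                  apply div_le_div_of_nonneg_right _ hc.le
                  exact max_le (by linarith) (by linarith)
        calc ‖∫ s in Set.Ioc a l, F (u * s)‖
            ≤ D * (volume (Set.Ioc a l)).toReal := hbound
          _ ≤ D * (l - r) := by
              apply mul_le_mul_of_nonneg_left _ hD_nonneg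
              rw [Real.volume_Ioc]
              rcases le_or_gt a l with h | h
              · rw [ENNReal.toReal_ofReal (by linarith)]; linarith
              · rw [ENNReal.toReal_ofReal_eq_iff.mpr] <;> [skip; linarith]
                linarith
      have outer : (∫ u in (0:ℝ)..1, ∫ s in (0:ℝ)..l, F (u * s)) ≤ D * (l - r) := by
        calc (∫ u in (0:ℝ)..1, ∫ s in (0:ℝ)..l, F (u * s))
            ≤ ‖∫ u in (0:ℝ)..1, ∫ s in (0:ℝ)..l, F (u * s)‖ := le_abs_self _
          _ ≤ D * (l - r) * |1 - 0| :=
              intervalIntegral.norm_integral_le_of_norm_le_const inner_bound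
          _ = D * (l - r) := by norm_num
      calc F l ≤ (1 / c) * ∫ u in (0:ℝ)..1, ∫ s in (0:ℝ)..l, F (u * s) := hF l hl
        _ ≤ (1 / c) * (D * (l - r)) := by
            apply mul_le_mul_of_nonneg_left outer (by positivity)
        _ = C * ((l - r) / c) ^ (n + 1) := by
            rw [hD]; ring
        _ = C * ((max (l - r) 0) / c) ^ (n + 1) := by rw [hmax]
  intro l hl hl2
  have hhalf : max (l - r) 0 / c ≤ 1 / 2 := by
    rw [div_le_div_iff₀ hc (by norm_num)]
    have : max (l - r) 0 ≤ c / 2 := max_le (by linarith) (by positivity)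
    linarith
  have hbd : ∀ n : ℕ, F l ≤ C * (1 / 2 : ℝ) ^ n := by
    intro n
    calc F l ≤ C * ((max (l - r) 0) / c) ^ n := key n l hl
      _ ≤ C * (1 / 2 : ℝ) ^ n := by
          apply mul_le_mul_of_nonneg_left _ hC
          exact pow_le_pow_left₀ (by positivity) hhalf n
  have htend : Filter.Tendsto (fun n : ℕ => C * (1 / 2 : ℝ) ^ n)
      Filter.atTop (nhds 0) := by
    rw [show (0:ℝ) = C * 0 by ring]
    exact Filter.Tendsto.const_mul C
      (tendsto_pow_atTop_nhds_zero_of_lt_one (by norm_num) (by norm_num))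
  have hle : F l ≤ 0 := ge_of_tendsto' htend hbd
  exact le_antisymm hle (hF_nonneg l hl)

theorem stmt_0 (F : ℝ → ℝ) (c C : ℝ) (hc : 0 < c)
    (hF_nonneg : ∀ l, 0 ≤ l → 0 ≤ F l)
    (hF_bdd : ∀ l, 0 ≤ l → F l ≤ C)
    (hF : ∀ l, 0 ≤ l →
      F l ≤ (1 / c) * ∫ u in (0:ℝ)..1, ∫ s in (0:ℝ)..l, F (u * s)) :
    ∀ l, 0 ≤ l → F l = 0 := by
  have hC : 0 ≤ C := le_trans (hF_nonneg 0 le_rfl) (hF_bdd 0 le_rfl)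
  have hF0 : F 0 = 0 := by
    have := hF 0 le_rfl
    simp [intervalIntegral.integral_same] at this
    exact le_antisymm this (hF_nonneg 0 le_rfl)
  have main : ∀ n : ℕ, ∀ l, 0 ≤ l → l ≤ n * (c / 2) → F l = 0 := by
    intro n
    induction n with
    | zero =>
      intro l hl hl2
      simp at hl2
      have : l = 0 := le_antisymm hl2 hl
      rw [this]; exact hF0
    | succ n ih =>
      have hrn : (0:ℝ) ≤ n * (c / 2) := by positivity
      intro l hl hl2
      apply step_aux F c C hc hC hF_nonneg hF_bdd hF (n * (c/2)) hrn ih l hl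
      push_cast at hl2 ⊢
      linarith
  intro l hl
  obtain ⟨n, hn⟩ := exists_nat_ge (l / (c / 2))
  apply main n l hl
  rw [div_le_iff₀ (by positivity)] at hn
  linarith
end

section
/- For nonnegative random variables X and Y with equal finite positive means, if the Laplace transforms of their size-biased transforms are equal for all λ ≥ 0, i.e. E[X e^{-λX}]/E[X] = E[Y e^{-λY}]/E[Y] for all λ ≥ 0, then X and Y have the same distribution. -/
open MeasureTheory ProbabilityTheory
open scoped ENNReal NNReal

-- Lemma B: finite measures on Icc 0 1 with equal moments are equal
lemma moments_det (μ ν : Measure (Set.Icc (0:ℝ) 1)) [IsFiniteMeasure μ] [IsFiniteMeasure ν]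
    (h : ∀ n : ℕ, ∫ t, (t:ℝ)^n ∂μ = ∫ t, (t:ℝ)^n ∂ν) : μ = ν := by
  have hint : ∀ (m : Measure (Set.Icc (0:ℝ) 1)) [IsFiniteMeasure m] (g : C((Set.Icc (0:ℝ) 1), ℝ)), Integrable g m := by
    intro m _ g
    exact g.continuous.integrable_of_hasCompactSupport (HasCompactSupport.of_compactSpace g)
  have hpoly : ∀ p : Polynomial ℝ, ∫ t, p.eval (t:ℝ) ∂μ = ∫ t, p.eval (t:ℝ) ∂ν := by
    intro p
    induction p using Polynomial.induction_on' with
    | add p q hp hq =>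
        have hiμp : Integrable (fun t : (Set.Icc (0:ℝ) 1) => p.eval (t:ℝ)) μ :=
          hint μ ⟨fun t => p.eval (t:ℝ), p.continuous.comp continuous_subtype_val⟩
        have hiμq : Integrable (fun t : (Set.Icc (0:ℝ) 1) => q.eval (t:ℝ)) μ :=
          hint μ ⟨fun t => q.eval (t:ℝ), q.continuous.comp continuous_subtype_val⟩
        have hiνp : Integrable (fun t : (Set.Icc (0:ℝ) 1) => p.eval (t:ℝ)) ν :=
          hint ν ⟨fun t => p.eval (t:ℝ), p.continuous.comp continuous_subtype_val⟩
        have hiνq : Integrable (fun t : (Set.Icc (0:ℝ) 1) => q.eval (t:ℝ)) ν :=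
          hint ν ⟨fun t => q.eval (t:ℝ), q.continuous.comp continuous_subtype_val⟩
        simp only [Polynomial.eval_add]
        rw [integral_add hiμp hiμq, integral_add hiνp hiνq, hp, hq]
    | monomial n a =>
        simp only [Polynomial.eval_monomial]
        rw [integral_const_mul, integral_const_mul, h n]
  have key : ∀ f : C((Set.Icc (0:ℝ) 1), ℝ), ∫ t, f t ∂μ = ∫ t, f t ∂ν := by
    intro f
    have hdense : f ∈ closure ((polynomialFunctions (Set.Icc (0:ℝ) 1) : Set C((Set.Icc (0:ℝ) 1), ℝ))) := by
      have := polynomialFunctions_closure_eq_top (0:ℝ) 1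
      rw [← Subalgebra.topologicalClosure_coe, this]
      simp
    have hest : ∀ ε : ℝ, 0 < ε →
        |(∫ t, f t ∂μ) - ∫ t, f t ∂ν| ≤ ε * ((μ Set.univ).toReal + (ν Set.univ).toReal) := by
      intro ε hε
      obtain ⟨g, hg_mem, hg_dist⟩ := Metric.mem_closure_iff.mp hdense ε hε
      have hgint : ∫ t, g t ∂μ = ∫ t, g t ∂ν := by
        obtain ⟨p, -, hp⟩ := Subalgebra.mem_map.mp hg_mem
        have : ∀ t : (Set.Icc (0:ℝ) 1), g t = p.eval (t:ℝ) := by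
          intro t
          rw [← hp]
          simp [Polynomial.toContinuousMapOnAlgHom, Polynomial.toContinuousMapOn,
            Polynomial.toContinuousMap]
        simp only [this]
        exact hpoly p
      have hbound : ∀ (m : Measure (Set.Icc (0:ℝ) 1)), IsFiniteMeasure m →
          |(∫ t, f t ∂m) - ∫ t, g t ∂m| ≤ ε * (m Set.univ).toReal := by
        intro m hm
        rw [← integral_sub (hint m f) (hint m g)]
        have : ∀ t : (Set.Icc (0:ℝ) 1), ‖f t - g t‖ ≤ ε := by
          intro t
          have := ContinuousMap.dist_apply_le_dist (f := f) (g := g) t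
          have h2 : dist (f t) (g t) ≤ dist f g := this
          calc ‖f t - g t‖ = dist (f t) (g t) := (Real.dist_eq _ _).symm
            _ ≤ dist f g := h2
            _ ≤ ε := le_of_lt hg_dist
        calc |∫ t, (f t - g t) ∂m| = ‖∫ t, (f t - g t) ∂m‖ := rfl
          _ ≤ ε * (m Set.univ).toReal :=
            norm_integral_le_of_norm_le_const (Filter.Eventually.of_forall this)
        
      calc |(∫ t, f t ∂μ) - ∫ t, f t ∂ν|
          = |((∫ t, f t ∂μ) - ∫ t, g t ∂μ) + ((∫ t, g t ∂ν) - ∫ t, f t ∂ν)| := by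
            rw [hgint]; ring_nf
        _ ≤ |(∫ t, f t ∂μ) - ∫ t, g t ∂μ| + |(∫ t, g t ∂ν) - ∫ t, f t ∂ν| := abs_add_le _ _
        _ ≤ ε * (μ Set.univ).toReal + ε * (ν Set.univ).toReal := by
            gcongr
            · exact hbound μ inferInstance
            · rw [abs_sub_comm]; exact hbound ν inferInstance
        _ = ε * ((μ Set.univ).toReal + (ν Set.univ).toReal) := by ring
    have : |(∫ t, f t ∂μ) - ∫ t, f t ∂ν| ≤ 0 := by
      by_contra hc
      push_neg at hc
      set C := (μ Set.univ).toReal + (ν Set.univ).toReal with hC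
      have hC0 : 0 ≤ C := by positivity
      have h1 := hest (|(∫ t, f t ∂μ) - ∫ t, f t ∂ν| / (C + 1)) (by positivity)
      have h2 : |(∫ t, f t ∂μ) - ∫ t, f t ∂ν| / (C + 1) * C <
          |(∫ t, f t ∂μ) - ∫ t, f t ∂ν| := by
        rw [div_mul_eq_mul_div, div_lt_iff₀ (by positivity)]
        nlinarith
      linarith
    have := abs_nonneg ((∫ t, f t ∂μ) - ∫ t, f t ∂ν)
    have : (∫ t, f t ∂μ) - ∫ t, f t ∂ν = 0 := by
      have := abs_eq_zero.mp (le_antisymm ‹_› ‹_›)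
      exact this
    linarith
  apply ext_of_forall_lintegral_eq_of_IsFiniteMeasure
  intro f
  have h1 := BoundedContinuousFunction.toReal_lintegral_coe_eq_integral f μ
  have h2 := BoundedContinuousFunction.toReal_lintegral_coe_eq_integral f ν
  have hfin1 : ∫⁻ x, (f x : ENNReal) ∂μ ≠ ⊤ :=
    (BoundedContinuousFunction.lintegral_lt_top_of_nnreal μ f).ne
  have hfin2 : ∫⁻ x, (f x : ENNReal) ∂ν ≠ ⊤ :=
    (BoundedContinuousFunction.lintegral_lt_top_of_nnreal ν f).ne
  have hk := key ⟨fun t => (f t : ℝ), NNReal.continuous_coe.comp f.continuous⟩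
  simp only [ContinuousMap.coe_mk] at hk
  rw [← h1, ← h2] at hk
  exact (ENNReal.toReal_eq_toReal_iff' hfin1 hfin2).mp hk

-- Lemma A: finite measures on ℝ supported on [0,∞) with equal Laplace values at naturals
lemma laplace_nat_det (μ ν : Measure ℝ) [IsFiniteMeasure μ] [IsFiniteMeasure ν]
    (hμ : μ (Set.Iio 0) = 0) (hν : ν (Set.Iio 0) = 0)
    (h : ∀ n : ℕ, ∫ x, Real.exp (-(n:ℝ) * x) ∂μ = ∫ x, Real.exp (-(n:ℝ) * x) ∂ν) :
    μ = ν := by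
  have hGmem : ∀ x : ℝ, Real.exp (-|x|) ∈ Set.Icc (0:ℝ) 1 :=
    fun x => ⟨(Real.exp_pos _).le, Real.exp_le_one_iff.mpr (by simp [neg_nonpos, abs_nonneg])⟩
  set G : ℝ → Set.Icc (0:ℝ) 1 := fun x => ⟨Real.exp (-|x|), hGmem x⟩ with hG_def
  have hGc : Continuous G :=
    Continuous.subtype_mk (Real.continuous_exp.comp (continuous_abs.neg)) _
  have hGm : Measurable G := hGc.measurable
  set H : Set.Icc (0:ℝ) 1 → ℝ := fun t => -Real.log t with hH_def
  have hHm : Measurable H := (Real.measurable_log.comp measurable_subtype_coe).neg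
  have hae : ∀ (m : Measure ℝ), m (Set.Iio 0) = 0 → ∀ᵐ x ∂m, 0 ≤ x := by
    intro m hm
    rw [ae_iff]
    convert hm using 2
    ext x; simp
  have hμae := hae μ hμ
  have hνae := hae ν hν
  haveI : IsFiniteMeasure (μ.map G) := Measure.isFiniteMeasure_map μ G
  haveI : IsFiniteMeasure (ν.map G) := Measure.isFiniteMeasure_map ν G
  have hmom : ∀ (m : Measure ℝ), IsFiniteMeasure m → (∀ᵐ x ∂m, 0 ≤ x) → ∀ n : ℕ,
      ∫ t, (t:ℝ)^n ∂(m.map G) = ∫ x, Real.exp (-(n:ℝ) * x) ∂m := by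
    intro m hfin hm n
    rw [integral_map hGm.aemeasurable]
    · refine integral_congr_ae ?_
      filter_upwards [hm] with x hx
      have : |x| = x := abs_of_nonneg hx
      simp only [hG_def, this]
      rw [← Real.exp_nat_mul]
      ring_nf
    · exact (continuous_subtype_val.pow n).aestronglyMeasurable
  have hmapeq : μ.map G = ν.map G := by
    apply moments_det
    intro n
    rw [hmom μ inferInstance hμae n, hmom ν inferInstance hνae n, h n]
  have hrec : ∀ (m : Measure ℝ), (∀ᵐ x ∂m, 0 ≤ x) → (m.map G).map H = m := by
    intro m hm
    rw [Measure.map_map hHm hGm]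
    have : H ∘ G =ᵐ[m] id := by
      filter_upwards [hm] with x hx
      simp only [Function.comp_apply, hH_def, hG_def, id_eq]
      rw [Real.log_exp]
      simp [abs_of_nonneg hx]
    rw [Measure.map_congr this, Measure.map_id]
  rw [← hrec μ hμae, ← hrec ν hνae, hmapeq]

lemma eq_of_withDensity_eq (m₁ m₂ : Measure ℝ) [IsProbabilityMeasure m₁] [IsProbabilityMeasure m₂]
    (h1 : m₁ (Set.Iio 0) = 0) (h2 : m₂ (Set.Iio 0) = 0)
    (h : m₁.withDensity (fun x => ENNReal.ofReal x) = m₂.withDensity (fun x => ENNReal.ofReal x)) :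
    m₁ = m₂ := by
  have hd : Measurable fun x : ℝ => ENNReal.ofReal x := ENNReal.measurable_ofReal
  have key : ∀ (m : Measure ℝ) (A : Set ℝ), MeasurableSet A → A ⊆ Set.Ioi 0 →
      m A = ∫⁻ x in A, (ENNReal.ofReal x)⁻¹ ∂(m.withDensity fun x => ENNReal.ofReal x) := by
    intro m A hA hA0
    rw [restrict_withDensity hA,
      lintegral_withDensity_eq_lintegral_mul _ hd (g := fun x => (ENNReal.ofReal x)⁻¹) (Measurable.inv hd)]
    have heq : ∀ x ∈ A, ENNReal.ofReal x * (ENNReal.ofReal x)⁻¹ = (1 : ℝ≥0∞) := by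
      intro x hx
      have hx0 : (0:ℝ) < x := hA0 hx
      rw [ENNReal.mul_inv_cancel (by simp [hx0]) (by simp)]
    calc m A = ∫⁻ _ in A, (1:ℝ≥0∞) ∂m := by rw [setLIntegral_one]
      _ = ∫⁻ x in A, ENNReal.ofReal x * (ENNReal.ofReal x)⁻¹ ∂m :=
          (setLIntegral_congr_fun hA (fun x hx => (heq x hx).symm))
      _ = _ := rfl
  have hIoi : m₁ (Set.Ioi 0) = m₂ (Set.Ioi 0) := by
    rw [key m₁ _ measurableSet_Ioi (fun x hx => hx), key m₂ _ measurableSet_Ioi (fun x hx => hx), h]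
  have hIci : ∀ (m : Measure ℝ), m (Set.Iio 0) = 0 → IsProbabilityMeasure m →
      m {(0:ℝ)} + m (Set.Ioi 0) = 1 := by
    intro m hm hp
    rw [← measure_union (by simp [Set.disjoint_left]) measurableSet_Ioi]
    rw [Set.singleton_union, Set.Ioi_insert]
    have : m (Set.Ici 0) + m (Set.Iio 0) = m Set.univ := by
      rw [← measure_union (by simp [Set.disjoint_left]) measurableSet_Iio]
      congr 1
      rw [Set.union_comm, Set.Iio_union_Ici]
    rw [hm, add_zero, measure_univ] at this
    exact this
  have hzero : m₁ {(0:ℝ)} = m₂ {(0:ℝ)} := by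
    have e1 := hIci m₁ h1 inferInstance
    have e2 := hIci m₂ h2 inferInstance
    rw [← hIoi] at e2
    rw [← e2] at e1
    exact (ENNReal.add_left_inj (measure_ne_top m₁ _)).mp e1
  apply Measure.ext
  intro s hs
  have hdecomp : ∀ (m : Measure ℝ), m (Set.Iio 0) = 0 →
      m s = m (s ∩ {(0:ℝ)}) + m (s ∩ Set.Ioi 0) := by
    intro m hm
    have h3 : m (s \ Set.Ioi 0) = m (s ∩ {(0:ℝ)}) := by
      apply le_antisymm
      · calc m (s \ Set.Ioi 0) ≤ m ((s ∩ {(0:ℝ)}) ∪ Set.Iio 0) := by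
              apply measure_mono
              intro x ⟨hxs, hxn⟩
              simp only [Set.mem_Ioi, not_lt] at hxn
              rcases lt_or_eq_of_le hxn with hlt | heq
              · exact Or.inr hlt
              · exact Or.inl ⟨hxs, by simp [heq]⟩
          _ ≤ m (s ∩ {(0:ℝ)}) + m (Set.Iio 0) := measure_union_le _ _
          _ = m (s ∩ {(0:ℝ)}) := by rw [hm, add_zero]
      · apply measure_mono
        intro x ⟨hxs, hx0⟩
        simp only [Set.mem_singleton_iff] at hx0
        exact ⟨hxs, by simp [hx0]⟩
    rw [← h3, add_comm]
    exact (measure_inter_add_diff s measurableSet_Ioi).symm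
  rw [hdecomp m₁ h1, hdecomp m₂ h2]
  congr 1
  · by_cases h0 : (0:ℝ) ∈ s
    · rw [Set.inter_eq_right.mpr (by simpa using h0), hzero]
    · rw [Set.inter_singleton_eq_empty.mpr h0]; simp
  · rw [key m₁ _ (hs.inter measurableSet_Ioi) Set.inter_subset_right,
      key m₂ _ (hs.inter measurableSet_Ioi) Set.inter_subset_right, h]

lemma withDensity_exp_integral (m : Measure ℝ) [IsFiniteMeasure m]
    (hm : m (Set.Iio 0) = 0) (n : ℕ) :
    ∫ x, Real.exp (-(n:ℝ) * x) ∂(m.withDensity fun x => ENNReal.ofReal x)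
      = ∫ x, x * Real.exp (-(n:ℝ) * x) ∂m := by
  rw [show (fun x : ℝ => ENNReal.ofReal x) = fun x : ℝ => ((Real.toNNReal x : ℝ≥0) : ℝ≥0∞) from
    rfl, integral_withDensity_eq_integral_smul measurable_real_toNNReal]
  refine integral_congr_ae ?_
  have hae : ∀ᵐ x ∂m, 0 ≤ x := by
    rw [ae_iff]
    convert hm using 2
    ext x; simp
  filter_upwards [hae] with x hx
  simp [NNReal.smul_def, Real.coe_toNNReal x hx]

lemma withDensity_ofReal_finite (m : Measure ℝ) (hint : Integrable (fun x : ℝ => x) m) :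
    IsFiniteMeasure (m.withDensity fun x => ENNReal.ofReal x) := by
  constructor
  rw [withDensity_apply _ MeasurableSet.univ, Measure.restrict_univ]
  exact hint.lintegral_lt_top

lemma withDensity_ofReal_supp (m : Measure ℝ) (hm : m (Set.Iio 0) = 0) :
    (m.withDensity fun x => ENNReal.ofReal x) (Set.Iio 0) = 0 := by
  rw [withDensity_apply _ measurableSet_Iio, Measure.restrict_eq_zero.mpr hm]
  simp

theorem stmt_3 {Ω : Type*} [MeasureSpace Ω] (P : Measure Ω) [IsProbabilityMeasure P]
    (X Y : Ω → ℝ) (hX : Measurable X) (hY : Measurable Y)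
    (hX_nonneg : ∀ ω, 0 ≤ X ω) (hY_nonneg : ∀ ω, 0 ≤ Y ω)
    (hX_int : Integrable X P) (hY_int : Integrable Y P)
    (h_mean_pos : 0 < ∫ ω, X ω ∂P)
    (h_mean_eq : ∫ ω, X ω ∂P = ∫ ω, Y ω ∂P)
    (h_laplace : ∀ l : ℝ, 0 ≤ l →
      (∫ ω, X ω * Real.exp (-l * X ω) ∂P) / (∫ ω, X ω ∂P) =
        (∫ ω, Y ω * Real.exp (-l * Y ω) ∂P) / (∫ ω, Y ω ∂P)) :
    P.map X = P.map Y := by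
  have hne : (∫ ω, X ω ∂P) ≠ 0 := ne_of_gt h_mean_pos
  have hsb : ∀ n : ℕ, ∫ ω, X ω * Real.exp (-(n:ℝ) * X ω) ∂P
      = ∫ ω, Y ω * Real.exp (-(n:ℝ) * Y ω) ∂P := by
    intro n
    have h := h_laplace n (Nat.cast_nonneg n)
    rw [← h_mean_eq, div_eq_div_iff hne hne] at h
    exact mul_right_cancel₀ hne h
  haveI : IsProbabilityMeasure (P.map X) := Measure.isProbabilityMeasure_map hX.aemeasurable
  haveI : IsProbabilityMeasure (P.map Y) := Measure.isProbabilityMeasure_map hY.aemeasurable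
  have hsupp : ∀ (Z : Ω → ℝ), Measurable Z → (∀ ω, 0 ≤ Z ω) → (P.map Z) (Set.Iio 0) = 0 := by
    intro Z hZ hZ0
    rw [Measure.map_apply hZ measurableSet_Iio]
    have : Z ⁻¹' Set.Iio 0 = ∅ := by
      ext ω
      simp only [Set.mem_preimage, Set.mem_Iio, Set.mem_empty_iff_false, iff_false, not_lt]
      exact hZ0 ω
    rw [this, measure_empty]
  have hμ0 := hsupp X hX hX_nonneg
  have hν0 := hsupp Y hY hY_nonneg
  have hmapint : ∀ (Z : Ω → ℝ), Measurable Z → Integrable Z P →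
      Integrable (fun x : ℝ => x) (P.map Z) := by
    intro Z hZ hZint
    exact (integrable_map_measure aestronglyMeasurable_id hZ.aemeasurable).mpr hZint
  haveI hρ1fin := withDensity_ofReal_finite (P.map X) (hmapint X hX hX_int)
  haveI hρ2fin := withDensity_ofReal_finite (P.map Y) (hmapint Y hY hY_int)
  have hcont : ∀ n : ℕ, Continuous fun x : ℝ => x * Real.exp (-(n:ℝ) * x) := fun n =>
    by continuity
  have hρeq : ((P.map X).withDensity fun x => ENNReal.ofReal x)
      = (P.map Y).withDensity fun x => ENNReal.ofReal x := by
    apply laplace_nat_det _ _ (withDensity_ofReal_supp _ hμ0) (withDensity_ofReal_supp _ hν0)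
    intro n
    rw [withDensity_exp_integral _ hμ0 n, withDensity_exp_integral _ hν0 n,
      integral_map hX.aemeasurable (hcont n).aestronglyMeasurable,
      integral_map hY.aemeasurable (hcont n).aestronglyMeasurable]
    exact hsb n
  exact eq_of_withDensity_eq _ _ hμ0 hν0 hρeq
end

section
/- Let Y be an exponential random variable with rate θ > 0, let Ẏ and Ẏ' be independent copies of its Y-size-biased transform (which has a Gamma(2,θ) distribution), let Ÿ be its Y²-size-biased transform (which has a Gamma(3,θ) distribution), and let U be uniform on [0,1], with Ẏ, Ẏ', Ÿ, U independent. Then Ÿ and Ẏ + U·Ẏ' have the same distribution. -/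
open MeasureTheory ProbabilityTheory

open Real Set

set_option maxHeartbeats 1000000
open MeasureTheory ProbabilityTheory Real Set

section Aux
variable {θ : ℝ}

lemma GammaN (n : ℕ) : Real.Gamma ((n+1:ℕ):ℝ) = (Nat.factorial n : ℝ) := by
  rw [show (((n+1:ℕ)):ℝ) = (n:ℝ) + 1 by push_cast; ring]
  exact Real.Gamma_nat_eq_factorial n

lemma pdf1_eq {x : ℝ} (hx : 0 ≤ x) :
    gammaPDF 1 θ x = ENNReal.ofReal (θ * exp (-(θ * x))) := by
  rw [gammaPDF_of_nonneg hx, show (1:ℝ)-1 = 0 by norm_num, Real.rpow_zero, Real.rpow_one,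
    Real.Gamma_one]
  ring_nf

lemma pdf2_eq {x : ℝ} (hx : 0 ≤ x) :
    gammaPDF 2 θ x = ENNReal.ofReal (θ^2 * x * exp (-(θ * x))) := by
  rw [gammaPDF_of_nonneg hx, show (2:ℝ)-1 = 1 by norm_num, Real.rpow_one,
    show (2:ℝ) = ((2:ℕ):ℝ) by norm_num, Real.rpow_natCast,
    show ((2:ℕ):ℝ) = (((1+1:ℕ)):ℝ) by norm_num, GammaN 1]
  norm_num

lemma pdf3_eq {x : ℝ} (hx : 0 ≤ x) :
    gammaPDF 3 θ x = ENNReal.ofReal (θ^3/2 * x^2 * exp (-(θ * x))) := by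
  rw [gammaPDF_of_nonneg hx, show (3:ℝ)-1 = ((2:ℕ):ℝ) by norm_num, Real.rpow_natCast,
    show (3:ℝ) = ((3:ℕ):ℝ) by norm_num, Real.rpow_natCast,
    show ((3:ℕ):ℝ) = (((2+1:ℕ)):ℝ) by norm_num, GammaN 2]
  norm_num [mul_comm, mul_assoc, mul_left_comm]

-- FTC lemmas
lemma int1 (hθ : 0 < θ) (t : ℝ) :
    ∫ x in (0:ℝ)..t, θ * exp (-(θ*x)) = 1 - exp (-(θ*t)) := by
  have h : ∀ x ∈ uIcc (0:ℝ) t, HasDerivAt (fun y => -exp (-(θ*y))) (θ * exp (-(θ*x))) x := by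
    intro x _
    have h1 : HasDerivAt (fun y : ℝ => -(θ*y)) (-θ) x := by
      exact (((hasDerivAt_id' x).const_mul θ).neg).congr_deriv (by ring)
    have : HasDerivAt (fun y => -exp (-(θ*y))) _ x := (h1.exp).neg
    convert this using 1; ring
  rw [intervalIntegral.integral_eq_sub_of_hasDerivAt h
    (Continuous.intervalIntegrable (by continuity) _ _)]
  simp; ring

lemma int2 (hθ : 0 < θ) (t : ℝ) :
    ∫ x in (0:ℝ)..t, θ^2 * x * exp (-(θ*x)) = 1 - (1 + θ*t) * exp (-(θ*t)) := by
  have h : ∀ x ∈ uIcc (0:ℝ) t,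
      HasDerivAt (fun y => -((1 + θ*y) * exp (-(θ*y)))) (θ^2 * x * exp (-(θ*x))) x := by
    intro x _
    have h1 : HasDerivAt (fun y : ℝ => -(θ*y)) (-θ) x := by
      exact (((hasDerivAt_id' x).const_mul θ).neg).congr_deriv (by ring)
    have h2 : HasDerivAt (fun y : ℝ => 1 + θ*y) θ x := by
      simpa using ((hasDerivAt_id x).const_mul θ).const_add 1
    have : HasDerivAt (fun y => -((1 + θ*y) * exp (-(θ*y)))) _ x := (h2.mul h1.exp).neg
    convert this using 1; ring
  rw [intervalIntegral.integral_eq_sub_of_hasDerivAt h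
    (Continuous.intervalIntegrable (by continuity) _ _)]
  simp; ring

lemma int3 (hθ : 0 < θ) (t : ℝ) :
    ∫ x in (0:ℝ)..t, θ^3/2 * x^2 * exp (-(θ*x))
      = 1 - (1 + θ*t + θ^2*t^2/2) * exp (-(θ*t)) := by
  have h : ∀ x ∈ uIcc (0:ℝ) t,
      HasDerivAt (fun y => -((1 + θ*y + θ^2*y^2/2) * exp (-(θ*y))))
        (θ^3/2 * x^2 * exp (-(θ*x))) x := by
    intro x _
    have h1 : HasDerivAt (fun y : ℝ => -(θ*y)) (-θ) x := by
      exact (((hasDerivAt_id' x).const_mul θ).neg).congr_deriv (by ring)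
    have h2 : HasDerivAt (fun y : ℝ => 1 + θ*y + θ^2*y^2/2) (θ + θ^2*x) x := by
      have ha : HasDerivAt (fun y : ℝ => y^2) (2*x) x := by
        simpa using hasDerivAt_pow 2 x
      have : HasDerivAt (fun y : ℝ => 1 + θ*y + θ^2*y^2/2) _ x := (((hasDerivAt_id x).const_mul θ).const_add 1).add
        ((ha.const_mul (θ^2)).div_const 2)
      convert this using 1; ring
    have : HasDerivAt (fun y => -((1 + θ*y + θ^2*y^2/2) * exp (-(θ*y)))) _ x := (h2.mul h1.exp).neg
    convert this using 1; ring
  rw [intervalIntegral.integral_eq_sub_of_hasDerivAt h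
    (Continuous.intervalIntegrable (by continuity) _ _)]
  simp; ring

lemma int4 (hθ : 0 < θ) (t : ℝ) :
    ∫ x in (0:ℝ)..t, θ^2 * x * exp (-(θ*x)) * (1 - exp (-(θ*(t-x))))
      = 1 - (1 + θ*t + θ^2*t^2/2) * exp (-(θ*t)) := by
  have key : ∀ x : ℝ, θ^2 * x * exp (-(θ*x)) * (1 - exp (-(θ*(t-x))))
      = θ^2 * x * exp (-(θ*x)) - θ^2 * x * exp (-(θ*t)) := by
    intro x
    have : exp (-(θ*x)) * exp (-(θ*(t-x))) = exp (-(θ*t)) := by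
      rw [← Real.exp_add]; ring_nf
    linear_combination (-(θ^2*x)) * this
  rw [intervalIntegral.integral_congr (fun x _ => key x)]
  rw [intervalIntegral.integral_sub]
  · rw [int2 hθ t, intervalIntegral.integral_mul_const, intervalIntegral.integral_const_mul,
      integral_id]
    ring
  · exact Continuous.intervalIntegrable (by continuity) _ _
  · exact Continuous.intervalIntegrable (by continuity) _ _

lemma intIoi (hθ : 0 < θ) (t : ℝ) :
    ∫ x in Ioi t, exp (-(θ*x)) = exp (-(θ*t))/θ := by
  have hne : θ ≠ 0 := hθ.ne'
  have hderiv : ∀ x ∈ Ici t, HasDerivAt (fun y : ℝ => -exp (-(θ*y))/θ) (exp (-(θ*x))) x := by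
    intro x _
    have h1 : HasDerivAt (fun y : ℝ => -(θ*y)) (-θ) x := by
      exact (((hasDerivAt_id' x).const_mul θ).neg).congr_deriv (by ring)
    have hd := (h1.exp.neg).div_const θ
    have e : -(exp (-(θ*x)) * -θ)/θ = exp (-(θ*x)) := by field_simp
    rw [← e]
    exact hd
  have h2 : Filter.Tendsto (fun x : ℝ => -exp (-(θ*x))/θ) Filter.atTop (nhds 0) := by
    have h1 : Filter.Tendsto (fun x : ℝ => θ * x) Filter.atTop Filter.atTop :=
      Filter.Tendsto.const_mul_atTop hθ Filter.tendsto_id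
    have h3 : Filter.Tendsto (fun x : ℝ => exp (-(θ*x))) Filter.atTop (nhds 0) :=
      Real.tendsto_exp_neg_atTop_nhds_zero.comp h1
    simpa using (h3.neg.div_const θ)
  have hint : IntegrableOn (fun x : ℝ => exp (-(θ*x))) (Ioi t) := by
    have := exp_neg_integrableOn_Ioi t hθ
    simpa [neg_mul] using this
  rw [MeasureTheory.integral_Ioi_of_hasDerivAt_of_tendsto' hderiv hint h2]
  field_simp
  ring


lemma gamma_Iic_neg (a : ℝ) {t : ℝ} (ht : t < 0) : gammaMeasure a θ (Iic t) = 0 := by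
  rw [gammaMeasure, withDensity_apply _ measurableSet_Iic]
  refine le_antisymm ?_ zero_le
  calc ∫⁻ x in Iic t, gammaPDF a θ x ≤ ∫⁻ x in Iio 0, gammaPDF a θ x :=
        lintegral_mono_set (fun x hx => lt_of_le_of_lt hx ht)
    _ = 0 := lintegral_gammaPDF_of_nonpos le_rfl

lemma gamma1_Iic (hθ : 0 < θ) {t : ℝ} (ht : 0 ≤ t) :
    gammaMeasure 1 θ (Iic t) = ENNReal.ofReal (1 - exp (-(θ*t))) := by
  rw [gammaMeasure, withDensity_apply _ measurableSet_Iic,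
    lintegral_Iic_eq_lintegral_Iio_add_Icc _ ht,
    lintegral_gammaPDF_of_nonpos le_rfl, zero_add,
    setLIntegral_congr_fun measurableSet_Icc
      (fun x (hx : x ∈ Icc 0 t) => pdf1_eq (θ := θ) hx.1),
    ← ofReal_integral_eq_lintegral_ofReal
      (Continuous.integrableOn_Icc (by continuity))
      (Filter.Eventually.of_forall (fun x => by positivity)),
    integral_Icc_eq_integral_Ioc, ← intervalIntegral.integral_of_le ht, int1 hθ t]

lemma gamma3_Iic (hθ : 0 < θ) {t : ℝ} (ht : 0 ≤ t) :
    gammaMeasure 3 θ (Iic t)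
      = ENNReal.ofReal (1 - (1 + θ*t + θ^2*t^2/2) * exp (-(θ*t))) := by
  rw [gammaMeasure, withDensity_apply _ measurableSet_Iic,
    lintegral_Iic_eq_lintegral_Iio_add_Icc _ ht,
    lintegral_gammaPDF_of_nonpos le_rfl, zero_add,
    setLIntegral_congr_fun measurableSet_Icc
      (fun x (hx : x ∈ Icc 0 t) => pdf3_eq (θ := θ) hx.1),
    ← ofReal_integral_eq_lintegral_ofReal
      (Continuous.integrableOn_Icc (by continuity))
      (Filter.Eventually.of_forall (fun x => by positivity)),
    integral_Icc_eq_integral_Ioc, ← intervalIntegral.integral_of_le ht, int3 hθ t]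

end Aux

/-- integrand for the law of `U * Ydot'` -/
noncomputable def kA (θ t x : ℝ) : ℝ :=
  if 0 < x then θ^2 * x * exp (-(θ*x)) * min 1 (t/x) else 0

/-- integrand for the law of `Ydot + V` -/
noncomputable def kB (θ t x : ℝ) : ℝ :=
  if 0 < x ∧ x ≤ t then θ^2 * x * exp (-(θ*x)) * (1 - exp (-(θ*(t-x)))) else 0

section K
variable {θ t : ℝ}

lemma kA_nonneg (ht : 0 ≤ t) (x : ℝ) : 0 ≤ kA θ t x := by
  unfold kA
  split_ifs with hx
  · exact mul_nonneg (by positivity) (le_min zero_le_one (div_nonneg ht hx.le))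
  · exact le_rfl

lemma kB_nonneg (hθ : 0 < θ) (x : ℝ) : 0 ≤ kB θ t x := by
  unfold kB
  split_ifs with hx
  · refine mul_nonneg (mul_nonneg (mul_nonneg (sq_nonneg θ) hx.1.le) (exp_pos _).le) ?_
    have : exp (-(θ*(t-x))) ≤ 1 := by
      rw [show (1:ℝ) = exp 0 from (exp_zero).symm]
      apply exp_le_exp.mpr
      nlinarith [hx.1, hx.2]
    linarith
  · exact le_rfl

lemma kA_eq1 : EqOn (fun _ => (0:ℝ)) (kA θ t) (Iic 0) := by
  intro x hx
  simp [kA, not_lt.mpr (mem_Iic.mp hx)]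

lemma kA_eq2 (ht : 0 ≤ t) :
    EqOn (fun x => θ^2 * x * exp (-(θ*x))) (kA θ t) (Ioc 0 t) := by
  intro x hx
  have h1 : (1:ℝ) ≤ t / x := (le_div_iff₀ hx.1).mpr (by simpa using hx.2)
  simp only [kA, if_pos hx.1, min_eq_left h1, mul_one]

lemma kA_eq3 (ht : 0 ≤ t) :
    EqOn (fun x => θ^2 * t * exp (-(θ*x))) (kA θ t) (Ioi t) := by
  intro x hx
  have hx0 : 0 < x := lt_of_le_of_lt ht hx
  simp only [kA, if_pos hx0, min_eq_right ((div_le_one hx0).mpr (le_of_lt hx))]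
  field_simp

lemma kA_int1 : IntegrableOn (kA θ t) (Iic 0) :=
  integrableOn_zero.congr_fun kA_eq1 measurableSet_Iic

lemma kA_int2 (ht : 0 ≤ t) : IntegrableOn (kA θ t) (Ioc 0 t) :=
  (Continuous.integrableOn_Ioc (by continuity)).congr_fun (kA_eq2 ht) measurableSet_Ioc

lemma kA_int3 (hθ : 0 < θ) (ht : 0 ≤ t) : IntegrableOn (kA θ t) (Ioi t) := by
  have hbase : IntegrableOn (fun x : ℝ => exp (-(θ*x))) (Ioi t) := by
    have := exp_neg_integrableOn_Ioi t hθ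
    simpa [neg_mul] using this
  exact MeasureTheory.IntegrableOn.congr_fun (hbase.const_mul (θ^2 * t)) (kA_eq3 ht) measurableSet_Ioi

lemma kA_intIoi0 (hθ : 0 < θ) (ht : 0 ≤ t) : IntegrableOn (kA θ t) (Ioi 0) := by
  rw [← Ioc_union_Ioi_eq_Ioi ht]
  exact (kA_int2 ht).union (kA_int3 hθ ht)

lemma kA_integrable (hθ : 0 < θ) (ht : 0 ≤ t) : Integrable (kA θ t) := by
  have h := kA_int1.union (kA_intIoi0 hθ ht)
  rwa [Iic_union_Ioi, integrableOn_univ] at h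

lemma kA_integral (hθ : 0 < θ) (ht : 0 ≤ t) :
    ∫ x, kA θ t x = 1 - exp (-(θ*t)) := by
  rw [← intervalIntegral.integral_Iic_add_Ioi kA_int1 (kA_intIoi0 hθ ht),
    ← Ioc_union_Ioi_eq_Ioi ht,
    setIntegral_union (Ioc_disjoint_Ioi le_rfl) measurableSet_Ioi (kA_int2 ht)
      (kA_int3 hθ ht),
    setIntegral_congr_fun measurableSet_Iic kA_eq1.symm,
    setIntegral_congr_fun measurableSet_Ioc (kA_eq2 ht).symm,
    setIntegral_congr_fun measurableSet_Ioi (kA_eq3 ht).symm]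
  rw [← intervalIntegral.integral_of_le ht, int2 hθ t]
  have h3 : ∫ x in Ioi t, θ^2 * t * exp (-(θ*x)) = θ^2 * t * (exp (-(θ*t))/θ) := by
    rw [MeasureTheory.integral_const_mul, intIoi hθ t]
  rw [h3]
  simp only [integral_zero]
  field_simp
  ring

lemma kB_eq1 : EqOn (fun _ => (0:ℝ)) (kB θ t) (Iic 0) := by
  intro x hx
  have : ¬ (0 < x ∧ x ≤ t) := fun h => absurd h.1 (not_lt.mpr hx)
  simp [kB, this]

lemma kB_eq2 (ht : 0 ≤ t) :
    EqOn (fun x => θ^2 * x * exp (-(θ*x)) * (1 - exp (-(θ*(t-x))))) (kB θ t) (Ioc 0 t) := by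
  intro x hx
  simp only [kB, if_pos (⟨hx.1, hx.2⟩ : 0 < x ∧ x ≤ t)]

lemma kB_eq3 : EqOn (fun _ => (0:ℝ)) (kB θ t) (Ioi t) := by
  intro x hx
  have : ¬ (0 < x ∧ x ≤ t) := fun h => absurd h.2 (not_le.mpr hx)
  simp [kB, this]

lemma kB_int1 : IntegrableOn (kB θ t) (Iic 0) :=
  integrableOn_zero.congr_fun kB_eq1 measurableSet_Iic

lemma kB_int2 (ht : 0 ≤ t) : IntegrableOn (kB θ t) (Ioc 0 t) :=
  (Continuous.integrableOn_Ioc (by continuity)).congr_fun (kB_eq2 ht) measurableSet_Ioc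

lemma kB_int3 : IntegrableOn (kB θ t) (Ioi t) :=
  integrableOn_zero.congr_fun kB_eq3 measurableSet_Ioi

lemma kB_intIoi0 (ht : 0 ≤ t) : IntegrableOn (kB θ t) (Ioi 0) := by
  rw [← Ioc_union_Ioi_eq_Ioi ht]
  exact (kB_int2 ht).union kB_int3

lemma kB_integrable (ht : 0 ≤ t) : Integrable (kB θ t) := by
  have h := (kB_int1 (θ := θ) (t := t)).union (kB_intIoi0 ht)
  rwa [Iic_union_Ioi, integrableOn_univ] at h

lemma kB_integral (hθ : 0 < θ) (ht : 0 ≤ t) :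
    ∫ x, kB θ t x = 1 - (1 + θ*t + θ^2*t^2/2) * exp (-(θ*t)) := by
  rw [← intervalIntegral.integral_Iic_add_Ioi kB_int1 (kB_intIoi0 ht),
    ← Ioc_union_Ioi_eq_Ioi ht,
    setIntegral_union (Ioc_disjoint_Ioi le_rfl) measurableSet_Ioi (kB_int2 ht) kB_int3,
    setIntegral_congr_fun measurableSet_Iic kB_eq1.symm,
    setIntegral_congr_fun measurableSet_Ioc (kB_eq2 ht).symm,
    setIntegral_congr_fun measurableSet_Ioi kB_eq3.symm]
  rw [← intervalIntegral.integral_of_le ht, int4 hθ t]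
  simp

end K

section Map
variable {θ : ℝ}

lemma mapA (hθ : 0 < θ) :
    Measure.map (fun p : ℝ × ℝ => p.2 * p.1)
      ((gammaMeasure 2 θ).prod (volume.restrict (Icc (0:ℝ) 1))) = gammaMeasure 1 θ := by
  haveI : IsProbabilityMeasure (gammaMeasure 2 θ) :=
    isProbabilityMeasure_gammaMeasure (by norm_num) hθ
  haveI hu : IsProbabilityMeasure (volume.restrict (Icc (0:ℝ) 1)) :=
    ⟨by simp [Real.volume_Icc]⟩
  haveI : IsProbabilityMeasure (gammaMeasure 1 θ) := isProbabilityMeasure_gammaMeasure one_pos hθ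
  have hmul : Measurable fun p : ℝ × ℝ => p.2 * p.1 := by fun_prop
  haveI : IsProbabilityMeasure (Measure.map (fun p : ℝ × ℝ => p.2 * p.1)
      ((gammaMeasure 2 θ).prod (volume.restrict (Icc (0:ℝ) 1)))) :=
    Measure.isProbabilityMeasure_map hmul.aemeasurable
  refine Measure.ext_of_Iic _ _ (fun t => ?_)
  rw [Measure.map_apply hmul measurableSet_Iic]
  have hs : MeasurableSet ((fun p : ℝ × ℝ => p.2 * p.1) ⁻¹' Iic t) :=
    hmul measurableSet_Iic
  rw [Measure.prod_apply hs]
  have hslice : ∀ x : ℝ, (Prod.mk x ⁻¹' ((fun p : ℝ × ℝ => p.2 * p.1) ⁻¹' Iic t))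
      = {u : ℝ | u * x ≤ t} := fun x => rfl
  have hKset : ∀ x : ℝ, MeasurableSet {u : ℝ | u * x ≤ t} := by
    intro x
    exact measurableSet_le (by fun_prop) measurable_const
  have hpdfm : Measurable (gammaPDF 2 θ) := (measurable_gammaPDFReal 2 θ).ennreal_ofReal
  rw [show (gammaMeasure 2 θ) = volume.withDensity (gammaPDF 2 θ) from rfl,
    lintegral_withDensity_eq_lintegral_mul _ hpdfm (measurable_measure_prodMk_left hs)]
  by_cases ht : 0 ≤ t
  · have hpt : ∀ x : ℝ, (gammaPDF 2 θ * fun x => (volume.restrict (Icc (0:ℝ) 1))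
        (Prod.mk x ⁻¹' ((fun p : ℝ × ℝ => p.2 * p.1) ⁻¹' Iic t))) x
        = ENNReal.ofReal (kA θ t x) := by
      intro x
      simp only [Pi.mul_apply, hslice x]
      rcases lt_trichotomy x 0 with hx | hx | hx
      · rw [gammaPDF_of_neg hx, zero_mul]
        simp [kA, not_lt.mpr hx.le]
      · subst hx
        rw [pdf2_eq le_rfl]
        simp [kA]
      · have hset : {u : ℝ | u * x ≤ t} = Iic (t/x) := by
          ext u; simp [le_div_iff₀ hx]
        have hK : (volume.restrict (Icc (0:ℝ) 1)) {u : ℝ | u * x ≤ t}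
            = ENNReal.ofReal (min 1 (t/x)) := by
          rw [hset, Measure.restrict_apply measurableSet_Iic, inter_comm,
            ← Ici_inter_Iic, inter_assoc, Iic_inter_Iic, Ici_inter_Iic,
            Real.volume_Icc, sub_zero]
        rw [hK, pdf2_eq hx.le, ← ENNReal.ofReal_mul (by positivity)]
        simp [kA, hx]
    rw [lintegral_congr hpt,
      ← ofReal_integral_eq_lintegral_ofReal (kA_integrable hθ ht)
        (Filter.Eventually.of_forall (kA_nonneg ht)),
      kA_integral hθ ht, gamma1_Iic hθ ht]
  · push_neg at ht
    have hzero : ∀ x : ℝ, (gammaPDF 2 θ * fun x => (volume.restrict (Icc (0:ℝ) 1))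
        (Prod.mk x ⁻¹' ((fun p : ℝ × ℝ => p.2 * p.1) ⁻¹' Iic t))) x = 0 := by
      intro x
      simp only [Pi.mul_apply, hslice x]
      rcases lt_or_ge x 0 with hx | hx
      · rw [gammaPDF_of_neg hx, zero_mul]
      · have hempty : {u : ℝ | u * x ≤ t} ∩ Icc (0:ℝ) 1 = ∅ := by
          rw [eq_empty_iff_forall_notMem]
          intro u hu
          obtain ⟨h1, h2, h3⟩ := hu
          have h1' : u * x ≤ t := h1
          nlinarith [mul_nonneg h2 hx]
        rw [Measure.restrict_apply (hKset x), hempty]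
        simp
    rw [lintegral_congr hzero, lintegral_zero, gamma_Iic_neg 1 ht]

lemma mapB (hθ : 0 < θ) :
    Measure.map (fun p : ℝ × ℝ => p.1 + p.2)
      ((gammaMeasure 2 θ).prod (gammaMeasure 1 θ)) = gammaMeasure 3 θ := by
  haveI : IsProbabilityMeasure (gammaMeasure 2 θ) :=
    isProbabilityMeasure_gammaMeasure (by norm_num) hθ
  haveI : IsProbabilityMeasure (gammaMeasure 1 θ) := isProbabilityMeasure_gammaMeasure one_pos hθ
  haveI : IsProbabilityMeasure (gammaMeasure 3 θ) :=
    isProbabilityMeasure_gammaMeasure (by norm_num) hθ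
  have hadd : Measurable fun p : ℝ × ℝ => p.1 + p.2 := by fun_prop
  haveI : IsProbabilityMeasure (Measure.map (fun p : ℝ × ℝ => p.1 + p.2)
      ((gammaMeasure 2 θ).prod (gammaMeasure 1 θ))) :=
    Measure.isProbabilityMeasure_map hadd.aemeasurable
  refine Measure.ext_of_Iic _ _ (fun t => ?_)
  rw [Measure.map_apply hadd measurableSet_Iic]
  have hs : MeasurableSet ((fun p : ℝ × ℝ => p.1 + p.2) ⁻¹' Iic t) :=
    hadd measurableSet_Iic
  rw [Measure.prod_apply hs]
  have hslice : ∀ x : ℝ, (Prod.mk x ⁻¹' ((fun p : ℝ × ℝ => p.1 + p.2) ⁻¹' Iic t))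
      = Iic (t - x) := by
    intro x
    ext y
    simp only [mem_preimage, mem_Iic]
    constructor <;> intro h <;> linarith
  have hpdfm : Measurable (gammaPDF 2 θ) := (measurable_gammaPDFReal 2 θ).ennreal_ofReal
  rw [show (gammaMeasure 2 θ) = volume.withDensity (gammaPDF 2 θ) from rfl,
    lintegral_withDensity_eq_lintegral_mul _ hpdfm (measurable_measure_prodMk_left hs)]
  by_cases ht : 0 ≤ t
  · have hpt : ∀ x : ℝ, (gammaPDF 2 θ * fun x => (gammaMeasure 1 θ)
        (Prod.mk x ⁻¹' ((fun p : ℝ × ℝ => p.1 + p.2) ⁻¹' Iic t))) x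
        = ENNReal.ofReal (kB θ t x) := by
      intro x
      simp only [Pi.mul_apply, hslice x]
      rcases lt_or_ge x 0 with hx | hx
      · rw [gammaPDF_of_neg hx, zero_mul]
        have : ¬ (0 < x ∧ x ≤ t) := fun h => absurd h.1 (not_lt.mpr hx.le)
        simp [kB, this]
      · rcases le_or_gt x t with hxt | hxt
        · rcases hx.lt_or_eq with hx0 | hx0
          · rw [gamma1_Iic hθ (by linarith : (0:ℝ) ≤ t - x), pdf2_eq hx,
              ← ENNReal.ofReal_mul (by positivity)]
            simp [kB, hx0, hxt]
          · subst hx0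
            rw [pdf2_eq le_rfl]
            simp [kB]
        · rw [gamma_Iic_neg 1 (by linarith : t - x < 0), mul_zero]
          have : ¬ (0 < x ∧ x ≤ t) := fun h => absurd h.2 (not_le.mpr hxt)
          simp [kB, this]
    rw [lintegral_congr hpt,
      ← ofReal_integral_eq_lintegral_ofReal (kB_integrable ht)
        (Filter.Eventually.of_forall (kB_nonneg hθ)),
      kB_integral hθ ht, gamma3_Iic hθ ht]
  · push_neg at ht
    have hzero : ∀ x : ℝ, (gammaPDF 2 θ * fun x => (gammaMeasure 1 θ)
        (Prod.mk x ⁻¹' ((fun p : ℝ × ℝ => p.1 + p.2) ⁻¹' Iic t))) x = 0 := by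
      intro x
      simp only [Pi.mul_apply, hslice x]
      rcases lt_or_ge x 0 with hx | hx
      · rw [gammaPDF_of_neg hx, zero_mul]
      · rw [gamma_Iic_neg 1 (by linarith : t - x < 0), mul_zero]
    rw [lintegral_congr hzero, lintegral_zero, gamma_Iic_neg 3 ht]

end Map

theorem stmt_4 {Ω : Type*} [MeasureSpace Ω] (P : Measure Ω) [IsProbabilityMeasure P]
    (θ : ℝ) (hθ : 0 < θ)
    (Ydot Ydot' Yddot U : Ω → ℝ)
    (hYdot : Measurable Ydot) (hYdot' : Measurable Ydot')
    (hYddot : Measurable Yddot) (hU : Measurable U)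
    (hYdot_law : P.map Ydot = gammaMeasure 2 θ)
    (hYdot'_law : P.map Ydot' = gammaMeasure 2 θ)
    (hYddot_law : P.map Yddot = gammaMeasure 3 θ)
    (hU_law : P.map U = (volume.restrict (Set.Icc (0:ℝ) 1)))
    (h_indep : iIndepFun ![Ydot, Ydot', Yddot, U] P) :
    P.map Yddot = P.map (fun ω => Ydot ω + U ω * Ydot' ω) := by
  have hmeas : ∀ i, Measurable (![Ydot, Ydot', Yddot, U] i) := by
    intro i
    fin_cases i
    · exact hYdot
    · exact hYdot'
    · exact hYddot
    · exact hU
  have h1 : IndepFun Ydot' U P := h_indep.indepFun (show (1 : Fin 4) ≠ 3 by decide)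
  have hpairlaw : P.map (fun ω => (Ydot' ω, U ω))
      = (gammaMeasure 2 θ).prod (volume.restrict (Set.Icc (0:ℝ) 1)) := by
    rw [← hYdot'_law, ← hU_law]
    exact (indepFun_iff_map_prod_eq_prod_map_map hYdot'.aemeasurable hU.aemeasurable).mp h1
  have hVlaw : P.map (fun ω => U ω * Ydot' ω) = gammaMeasure 1 θ := by
    have hcomp : (fun ω => U ω * Ydot' ω)
        = (fun p : ℝ × ℝ => p.2 * p.1) ∘ (fun ω => (Ydot' ω, U ω)) := rfl
    rw [hcomp, ← Measure.map_map (by fun_prop) (hYdot'.prodMk hU), hpairlaw, mapA hθ]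
  have hIndep2 : IndepFun Ydot (fun ω => U ω * Ydot' ω) P := by
    have h0 := (h_indep.indepFun_prodMk hmeas 1 3 0 (by decide) (by decide)).symm
    exact h0.comp measurable_id (show Measurable fun p : ℝ × ℝ => p.2 * p.1 by fun_prop)
  have hpair2 : P.map (fun ω => (Ydot ω, U ω * Ydot' ω))
      = (gammaMeasure 2 θ).prod (gammaMeasure 1 θ) := by
    rw [← hYdot_law, ← hVlaw]
    exact (indepFun_iff_map_prod_eq_prod_map_map hYdot.aemeasurable
      (hU.mul hYdot').aemeasurable).mp hIndep2
  have hcomp2 : (fun ω => Ydot ω + U ω * Ydot' ω)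
      = (fun p : ℝ × ℝ => p.1 + p.2) ∘ (fun ω => (Ydot ω, U ω * Ydot' ω)) := rfl
  rw [hYddot_law, hcomp2, ← Measure.map_map (by fun_prop) (hYdot.prodMk (by fun_prop : Measurable fun ω => U ω * Ydot' ω)),
    hpair2, mapB hθ]
end

section
/- Let X be a nonnegative random variable with E[X] ∈ (0,∞). Then for every λ ≥ 0, E[1 - e^{-λX} | X > 0] = E[X | X > 0] · ∫₀^λ E[e^{-sẊ}] ds, where Ẋ is the X-size-biased transform of X. -/
open MeasureTheory ProbabilityTheory
open scoped NNReal ENNReal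

/-- The law of the `X`-size-biased transform of a random variable with law `μ`
and mean `a`: `dν(x) = x dμ(x) / a`. -/
noncomputable def sizeBiasedLaw (μ : Measure ℝ) (a : ℝ) : Measure ℝ :=
  (ENNReal.ofReal a)⁻¹ • μ.withDensity (fun x => ENNReal.ofReal x)

theorem stmt_6 {Ω : Type*} [MeasureSpace Ω] (P : Measure Ω) [IsProbabilityMeasure P]
    (X : Ω → ℝ) (hX : Measurable X) (hX_nonneg : ∀ ω, 0 ≤ X ω)
    (hX_int : Integrable X P) (hX_pos : 0 < ∫ ω, X ω ∂P) :
    ∀ l : ℝ, 0 ≤ l →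
      ∫ ω, (1 - Real.exp (-l * X ω)) ∂(P[|{ω | 0 < X ω}]) =
        (∫ ω, X ω ∂(P[|{ω | 0 < X ω}])) *
          ∫ s in (0:ℝ)..l,
            ∫ x, Real.exp (-s * x) ∂(sizeBiasedLaw (P.map X) (∫ ω, X ω ∂P)) := by
  intro l hl
  set a : ℝ := ∫ ω, X ω ∂P with ha_def
  set s : Set Ω := {ω | 0 < X ω} with hs_def
  have hs_meas : MeasurableSet s := measurableSet_lt measurable_const hX
  have hzero : ∀ ω, ω ∉ s → X ω = 0 := fun ω h =>
    le_antisymm (not_lt.mp h) (hX_nonneg ω)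
  -- conditional expectation formula
  have hcond : ∀ f : Ω → ℝ, (∀ ω, ω ∉ s → f ω = 0) →
      ∫ ω, f ω ∂(P[|s]) = (P s).toReal⁻¹ * ∫ ω, f ω ∂P := by
    intro f hf
    rw [ProbabilityTheory.cond, integral_smul_measure, ENNReal.toReal_inv,
      setIntegral_eq_integral_of_forall_compl_eq_zero hf, smul_eq_mul]
  -- inner integral against the size-biased law
  have hinner : ∀ t : ℝ, ∫ x, Real.exp (-t * x) ∂(sizeBiasedLaw (P.map X) a) =
      a⁻¹ * ∫ ω, X ω * Real.exp (-t * X ω) ∂P := by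
    intro t
    rw [sizeBiasedLaw, integral_smul_measure, ENNReal.toReal_inv,
      ENNReal.toReal_ofReal hX_pos.le]
    have h1 : ∫ x, Real.exp (-t * x)
        ∂((P.map X).withDensity fun x => ((Real.toNNReal x : ℝ≥0) : ℝ≥0∞)) =
        ∫ x, Real.toNNReal x • Real.exp (-t * x) ∂(P.map X) :=
      integral_withDensity_eq_integral_smul measurable_real_toNNReal _
    rw [show (fun x : ℝ => ENNReal.ofReal x)
        = fun x => ((Real.toNNReal x : ℝ≥0) : ℝ≥0∞) from rfl, h1, smul_eq_mul]
    congr 1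
    have hmeas : AEStronglyMeasurable (fun x : ℝ => Real.toNNReal x • Real.exp (-t * x))
        (P.map X) := by
      apply Measurable.aestronglyMeasurable
      fun_prop
    rw [integral_map hX.aemeasurable hmeas]
    refine integral_congr_ae (Filter.Eventually.of_forall fun ω => ?_)
    simp [NNReal.smul_def, Real.coe_toNNReal _ (hX_nonneg ω)]
  -- pointwise interval integral
  have hpoint : ∀ ω, ∫ t in (0:ℝ)..l, X ω * Real.exp (-t * X ω) =
      1 - Real.exp (-l * X ω) := by
    intro ω
    set c := X ω with hc
    have hder : ∀ t ∈ Set.uIcc (0:ℝ) l,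
        HasDerivAt (fun t => -Real.exp (-t * c)) (c * Real.exp (-t * c)) t := by
      intro t _
      have h1 : HasDerivAt (fun t : ℝ => -t * c) (-c) t := by
        simpa using (hasDerivAt_neg t).mul_const c
      have := (h1.exp).neg
      rw [show c * Real.exp (-t * c) = -(Real.exp (-t * c) * -c) by ring]
      exact this
    have hint : IntervalIntegrable (fun t => c * Real.exp (-t * c)) volume 0 l := by
      exact (Continuous.intervalIntegrable (by continuity) 0 l)
    have h2 := intervalIntegral.integral_eq_sub_of_hasDerivAt hder hint
    simp only [neg_mul, zero_mul, neg_zero, Real.exp_zero, sub_neg_eq_add] at h2 ⊢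
    linarith [h2]
  -- Fubini
  have hF_meas : AEStronglyMeasurable (fun z : ℝ × Ω => X z.2 * Real.exp (-z.1 * X z.2))
      ((volume.restrict (Set.Ioc (0:ℝ) l)).prod P) := by
    refine Measurable.aestronglyMeasurable ?_
    exact (hX.comp measurable_snd).mul
      ((measurable_fst.neg.mul (hX.comp measurable_snd)).exp)
  have hdom : Integrable (fun z : ℝ × Ω => X z.2)
      ((volume.restrict (Set.Ioc (0:ℝ) l)).prod P) := by
    have hmap : Measure.map Prod.snd ((volume.restrict (Set.Ioc (0:ℝ) l)).prod P) =
        (volume.restrict (Set.Ioc (0:ℝ) l)) Set.univ • P := Measure.map_snd_prod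
    have h2 : Integrable X (Measure.map Prod.snd
        ((volume.restrict (Set.Ioc (0:ℝ) l)).prod P)) := by
      rw [hmap]
      refine hX_int.smul_measure ?_
      rw [Measure.restrict_apply_univ]
      exact measure_Ioc_lt_top.ne
    have := (integrable_map_measure hX.aestronglyMeasurable
      measurable_snd.aemeasurable).mp (by exact h2)
    exact this
  have hF_int : Integrable (fun z : ℝ × Ω => X z.2 * Real.exp (-z.1 * X z.2))
      ((volume.restrict (Set.Ioc (0:ℝ) l)).prod P) := by
    refine hdom.mono' hF_meas ?_
    have hprod : (volume.restrict (Set.Ioc (0:ℝ) l)).prod P =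
        (volume.prod P).restrict (Set.Ioc (0:ℝ) l ×ˢ Set.univ) := by
      rw [← Measure.prod_restrict, Measure.restrict_univ]
    rw [hprod]
    filter_upwards [ae_restrict_mem (measurableSet_Ioc.prod MeasurableSet.univ)] with z hz
    have hz1 : 0 < z.1 := hz.1.1
    have hXz : 0 ≤ X z.2 := hX_nonneg z.2
    have hexp : Real.exp (-z.1 * X z.2) ≤ 1 := by
      rw [Real.exp_le_one_iff]
      nlinarith
    have : |X z.2 * Real.exp (-z.1 * X z.2)| = X z.2 * Real.exp (-z.1 * X z.2) := by
      rw [abs_of_nonneg]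
      positivity
    rw [Real.norm_eq_abs, this]
    nlinarith [Real.exp_pos (-z.1 * X z.2)]
  have hswap : ∫ t in Set.Ioc (0:ℝ) l, (∫ ω, X ω * Real.exp (-t * X ω) ∂P) =
      ∫ ω, (∫ t in Set.Ioc (0:ℝ) l, X ω * Real.exp (-t * X ω)) ∂P :=
    integral_integral_swap hF_int
  -- nonvanishing of P s
  have hp_ne : P s ≠ 0 := by
    intro h
    have hX0 : X =ᵐ[P] 0 := by
      refine measure_mono_null (fun ω hω => ?_) h
      simp only [Set.mem_setOf_eq] at hω ⊢
      exact lt_of_le_of_ne (hX_nonneg ω) (Ne.symm hω)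
    have : a = 0 := by
      rw [ha_def, integral_congr_ae hX0]
      simp
    exact absurd this (ne_of_gt hX_pos)
  have hp_pos : 0 < (P s).toReal :=
    ENNReal.toReal_pos hp_ne (measure_ne_top _ _)
  -- put everything together
  have hL : ∫ ω, (1 - Real.exp (-l * X ω)) ∂(P[|s]) =
      (P s).toReal⁻¹ * ∫ ω, (1 - Real.exp (-l * X ω)) ∂P := by
    refine hcond _ fun ω hω => ?_
    simp [hzero ω hω]
  have hXc : ∫ ω, X ω ∂(P[|s]) = (P s).toReal⁻¹ * a :=
    hcond X hzero
  rw [hL, hXc]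
  have hR : ∫ t in (0:ℝ)..l,
      ∫ x, Real.exp (-t * x) ∂(sizeBiasedLaw (P.map X) a) =
      a⁻¹ * ∫ ω, (1 - Real.exp (-l * X ω)) ∂P := by
    have h1 : ∀ t : ℝ, ∫ x, Real.exp (-t * x) ∂(sizeBiasedLaw (P.map X) a) =
        a⁻¹ * ∫ ω, X ω * Real.exp (-t * X ω) ∂P := hinner
    rw [intervalIntegral.integral_congr (g := fun t =>
      a⁻¹ * ∫ ω, X ω * Real.exp (-t * X ω) ∂P) (fun t _ => h1 t)]
    rw [intervalIntegral.integral_const_mul]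
    congr 1
    rw [intervalIntegral.integral_of_le hl, hswap]
    refine integral_congr_ae (Filter.Eventually.of_forall fun ω => ?_)
    show ∫ t in Set.Ioc (0:ℝ) l, X ω * Real.exp (-t * X ω) = 1 - Real.exp (-l * X ω)
    rw [← intervalIntegral.integral_of_le hl]
    exact hpoint ω
  rw [hR]
  field_simp
end

section
/- Let (Z_n) be a critical Galton-Watson process with Z₀ = 1, offspring mean 1, and offspring variance σ² ∈ (0,∞). Then n·P(Z_n > 0) → 2/σ² as n → ∞. -/
open MeasureTheory ProbabilityTheory Filter

namespace GW12


/-! ### Elementary polynomial inequalities -/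

lemma pow_sub_pow_le (k : ℕ) {a b : ℝ} (hb : 0 ≤ b) (hab : b ≤ a) (ha : a ≤ 1) :
    a ^ k - b ^ k ≤ k * (a - b) := by
  induction k with
  | zero => simp
  | succ k ih =>
    have hbk : b ^ k ≤ a ^ k := pow_le_pow_left₀ hb hab k
    have hak : a ^ k ≤ 1 := pow_le_one₀ (hb.trans hab) ha
    have h1 : a ^ k * (a - b) ≤ 1 * (a - b) :=
      mul_le_mul_of_nonneg_right hak (by linarith)
    have h2 : b * (a ^ k - b ^ k) ≤ 1 * (a ^ k - b ^ k) :=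
      mul_le_mul_of_nonneg_right (by linarith) (by linarith)
    have : a ^ (k+1) - b ^ (k+1) = a ^ k * (a - b) + b * (a ^ k - b ^ k) := by ring
    push_cast
    nlinarith [ih]

lemma one_sub_pow_le (k : ℕ) {s : ℝ} (hs0 : 0 ≤ s) (hs1 : s ≤ 1) :
    1 - s ^ k ≤ k * (1 - s) := by
  simpa using pow_sub_pow_le k hs0 hs1 le_rfl

lemma one_sub_pow_lt {s : ℝ} (h0 : 0 ≤ s) (h1 : s < 1) :
    ∀ k : ℕ, 2 ≤ k → 1 - s ^ k < k * (1 - s) := by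
  intro k hk
  induction k with
  | zero => omega
  | succ k ih =>
    rcases Nat.lt_or_ge k 2 with hk2 | hk2
    · interval_cases k
      · omega
      · push_cast; nlinarith
    · have hik := ih hk2
      have hpk : s ^ k ≤ 1 := pow_le_one₀ h0 h1.le
      have : s * (1 - s ^ k) ≤ 1 - s ^ k := by nlinarith
      have hid : 1 - s ^ (k+1) = (1 - s) + s * (1 - s ^ k) := by ring
      push_cast
      nlinarith

lemma taylor_lower (k : ℕ) {t : ℝ} (ht : t ≤ 2) :
    0 ≤ (1 - t) ^ k - 1 + k * t := by
  have := one_add_mul_le_pow (a := -t) (by linarith) k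
  have h : 1 + (k : ℝ) * (-t) ≤ (1 + -t) ^ k := this
  rw [show (1 + -t : ℝ) = 1 - t by ring] at h
  linarith

lemma taylor_upper (k : ℕ) {t : ℝ} (ht0 : 0 ≤ t) (ht1 : t ≤ 1) :
    (1 - t) ^ k - 1 + k * t ≤ (k : ℝ) * ((k : ℝ) - 1) / 2 * t ^ 2 := by
  induction k with
  | zero => norm_num
  | succ k ih =>
    have hlow : 0 ≤ (1 - t) ^ k - 1 + k * t := taylor_lower k (by linarith)
    have hid : (1 - t) ^ (k+1) - 1 + (k+1 : ℝ) * t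
        = (1 - t) * ((1 - t) ^ k - 1 + k * t) + k * t ^ 2 := by ring
    have h1 : (1 - t) * ((1 - t) ^ k - 1 + k * t) ≤ (1 - t) ^ k - 1 + k * t := by nlinarith
    push_cast
    nlinarith

lemma tendsto_taylor (k : ℕ) :
    Tendsto (fun t : ℝ => ((1 - t) ^ k - 1 + k * t) / t ^ 2) (nhdsWithin 0 (Set.Ioi 0))
      (nhds ((k : ℝ) * ((k : ℝ) - 1) / 2)) := by
  induction k with
  | zero =>
    have : (fun t : ℝ => ((1 - t) ^ 0 - 1 + (0:ℕ) * t) / t ^ 2) = fun _ => (0:ℝ) := by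
      funext t; simp
    rw [this]
    norm_num
  | succ k ih =>
    have h1t : Tendsto (fun t : ℝ => 1 - t) (nhdsWithin 0 (Set.Ioi 0)) (nhds 1) := by
      have h0 : Tendsto (fun t : ℝ => 1 - t) (nhds 0) (nhds (1 - 0)) :=
        tendsto_id.const_sub 1
      simpa using h0.mono_left nhdsWithin_le_nhds
    have hmain := (h1t.mul ih).add (tendsto_const_nhds (x := (k:ℝ)))
    have heq : (fun t : ℝ => (1 - t) * (((1 - t) ^ k - 1 + k * t) / t ^ 2) + (k:ℝ))
        =ᶠ[nhdsWithin 0 (Set.Ioi 0)]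
        (fun t : ℝ => ((1 - t) ^ (k+1) - 1 + ((k:ℕ)+1 : ℝ) * t) / t ^ 2) := by
      filter_upwards [self_mem_nhdsWithin] with t ht
      have ht0 : t ≠ 0 := ne_of_gt ht
      field_simp
      ring
    have hval : (1:ℝ) * ((k : ℝ) * ((k : ℝ) - 1) / 2) + (k:ℝ)
        = ((k+1 : ℕ) : ℝ) * (((k+1 : ℕ) : ℝ) - 1) / 2 := by push_cast; ring
    rw [hval] at hmain
    refine (hmain.congr' heq).congr ?_
    intro t
    push_cast
    ring_nf



noncomputable def F (μ : ℕ → ℝ) (s : ℝ) : ℝ := ∑' k, μ k * s ^ k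

variable {μ : ℕ → ℝ}

lemma summable_of_tsum_eq_one {g : ℕ → ℝ} (h : ∑' k, g k = 1) : Summable g := by
  by_contra hc
  rw [tsum_eq_zero_of_not_summable hc] at h
  norm_num at h

lemma F_summable (hnn : ∀ k, 0 ≤ μ k) (hsum : Summable μ) {s : ℝ}
    (hs : s ∈ Set.Icc (0:ℝ) 1) : Summable fun k => μ k * s ^ k :=
  Summable.of_nonneg_of_le (fun k => mul_nonneg (hnn k) (pow_nonneg hs.1 k))
    (fun k => mul_le_of_le_one_right (hnn k) (pow_le_one₀ hs.1 hs.2)) hsum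

lemma F_nonneg (hnn : ∀ k, 0 ≤ μ k) {s : ℝ} (hs : s ∈ Set.Icc (0:ℝ) 1) : 0 ≤ F μ s :=
  tsum_nonneg fun k => mul_nonneg (hnn k) (pow_nonneg hs.1 k)

lemma F_le_one (hnn : ∀ k, 0 ≤ μ k) (hsum : Summable μ) (h1 : ∑' k, μ k = 1)
    {s : ℝ} (hs : s ∈ Set.Icc (0:ℝ) 1) : F μ s ≤ 1 := by
  rw [← h1]
  exact Summable.tsum_le_tsum (fun k => mul_le_of_le_one_right (hnn k) (pow_le_one₀ hs.1 hs.2))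
    (F_summable hnn hsum hs) hsum

lemma summable_one_sub_pow (hnn : ∀ k, 0 ≤ μ k) (hsum : Summable μ) {s : ℝ}
    (hs : s ∈ Set.Icc (0:ℝ) 1) : Summable fun k => μ k * (1 - s ^ k) := by
  have : (fun k => μ k * (1 - s ^ k)) = fun k => μ k - μ k * s ^ k := by
    funext k; ring
  rw [this]
  exact hsum.sub (F_summable hnn hsum hs)

lemma one_sub_F (hnn : ∀ k, 0 ≤ μ k) (hsum : Summable μ) (h1 : ∑' k, μ k = 1)
    {s : ℝ} (hs : s ∈ Set.Icc (0:ℝ) 1) :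
    1 - F μ s = ∑' k, μ k * (1 - s ^ k) := by
  have h2 : (fun k => μ k * (1 - s ^ k)) = fun k => μ k - μ k * s ^ k := by
    funext k; ring
  rw [h2, Summable.tsum_sub hsum (F_summable hnn hsum hs), h1]
  rfl



variable {μ : ℕ → ℝ}

lemma F_ge_self (hnn : ∀ k, 0 ≤ μ k) (hsum : Summable μ) (h1 : ∑' k, μ k = 1)
    (hmean_sum : Summable fun k : ℕ => (k:ℝ) * μ k) (hmean : ∑' k : ℕ, (k:ℝ) * μ k = 1)
    (hone_sub : ∀ {s : ℝ}, s ∈ Set.Icc (0:ℝ) 1 → 1 - F μ s = ∑' k, μ k * (1 - s ^ k))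
    (hsummable_one_sub : ∀ {s : ℝ}, s ∈ Set.Icc (0:ℝ) 1 → Summable fun k => μ k * (1 - s ^ k))
    (hle : ∀ (k : ℕ) {s : ℝ}, 0 ≤ s → s ≤ 1 → 1 - s ^ k ≤ k * (1 - s))
    {s : ℝ} (hs : s ∈ Set.Icc (0:ℝ) 1) : s ≤ F μ s := by
  have key : 1 - F μ s ≤ 1 - s := by
    rw [hone_sub hs]
    have hb : ∀ k : ℕ, μ k * (1 - s ^ k) ≤ (1 - s) * ((k:ℝ) * μ k) := by
      intro k
      have := hle k hs.1 hs.2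
      have h0 := hnn k
      nlinarith
    calc ∑' k, μ k * (1 - s ^ k) ≤ ∑' k : ℕ, (1 - s) * ((k:ℝ) * μ k) :=
          Summable.tsum_le_tsum hb (hsummable_one_sub hs) (hmean_sum.mul_left _)
      _ = (1 - s) * ∑' k : ℕ, (k:ℝ) * μ k := tsum_mul_left
      _ = 1 - s := by rw [hmean]; ring
  linarith

lemma exists_big (hnn : ∀ k, 0 ≤ μ k)
    (hσ2_summable : Summable (fun k : ℕ => (k : ℝ) * ((k : ℝ) - 1) * μ k))
    {σ2 : ℝ} (hσ2_pos : 0 < σ2) (hσ2 : σ2 = ∑' k : ℕ, (k : ℝ) * ((k : ℝ) - 1) * μ k) :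
    ∃ k : ℕ, 2 ≤ k ∧ 0 < μ k := by
  by_contra hc
  push_neg at hc
  have hz : ∀ k : ℕ, (k : ℝ) * ((k : ℝ) - 1) * μ k = 0 := by
    intro k
    match k with
    | 0 => simp
    | 1 => simp
    | (n+2) =>
      have h1 := hc (n+2) (by omega)
      have h2 := hnn (n+2)
      have : μ (n+2) = 0 := le_antisymm h1 h2
      rw [this, mul_zero]
  rw [hσ2, tsum_congr hz, tsum_zero] at hσ2_pos
  exact lt_irrefl 0 hσ2_pos

lemma F_gt_self (hnn : ∀ k, 0 ≤ μ k) (hsum : Summable μ) (h1 : ∑' k, μ k = 1)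
    (hmean_sum : Summable fun k : ℕ => (k:ℝ) * μ k) (hmean : ∑' k : ℕ, (k:ℝ) * μ k = 1)
    (hone_sub : ∀ {s : ℝ}, s ∈ Set.Icc (0:ℝ) 1 → 1 - F μ s = ∑' k, μ k * (1 - s ^ k))
    (hsummable_one_sub : ∀ {s : ℝ}, s ∈ Set.Icc (0:ℝ) 1 → Summable fun k => μ k * (1 - s ^ k))
    (hle : ∀ (k : ℕ) {s : ℝ}, 0 ≤ s → s ≤ 1 → 1 - s ^ k ≤ k * (1 - s))
    (hlt : ∀ {s : ℝ}, 0 ≤ s → s < 1 → ∀ k : ℕ, 2 ≤ k → 1 - s ^ k < k * (1 - s))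
    {k₀ : ℕ} (hk₀ : 2 ≤ k₀) (hk₀pos : 0 < μ k₀)
    {s : ℝ} (hs : s ∈ Set.Ico (0:ℝ) 1) : s < F μ s := by
  have hs' : s ∈ Set.Icc (0:ℝ) 1 := ⟨hs.1, hs.2.le⟩
  have key : 1 - F μ s < 1 - s := by
    rw [hone_sub hs']
    have hb : ∀ k : ℕ, μ k * (1 - s ^ k) ≤ (1 - s) * ((k:ℝ) * μ k) := by
      intro k
      have := hle k hs.1 hs.2.le
      have h0 := hnn k
      nlinarith
    have hbs : μ k₀ * (1 - s ^ k₀) < (1 - s) * ((k₀:ℝ) * μ k₀) := by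
      have := hlt hs.1 hs.2 k₀ hk₀
      nlinarith
    calc ∑' k, μ k * (1 - s ^ k) < ∑' k : ℕ, (1 - s) * ((k:ℝ) * μ k) :=
          Summable.tsum_lt_tsum hb hbs (hsummable_one_sub hs') (hmean_sum.mul_left _)
      _ = (1 - s) * ∑' k : ℕ, (k:ℝ) * μ k := tsum_mul_left
      _ = 1 - s := by rw [hmean]; ring
  linarith

lemma F_lipschitz (hnn : ∀ k, 0 ≤ μ k) (hsum : Summable μ)
    (hmean_sum : Summable fun k : ℕ => (k:ℝ) * μ k) (hmean : ∑' k : ℕ, (k:ℝ) * μ k = 1)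
    (hFsummable : ∀ {s : ℝ}, s ∈ Set.Icc (0:ℝ) 1 → Summable fun k => μ k * s ^ k)
    (hpow : ∀ (k : ℕ) {a b : ℝ}, 0 ≤ b → b ≤ a → a ≤ 1 → a ^ k - b ^ k ≤ k * (a - b))
    {s₁ s₂ : ℝ} (h0 : 0 ≤ s₂) (h12 : s₂ ≤ s₁) (h11 : s₁ ≤ 1) :
    F μ s₁ - F μ s₂ ≤ s₁ - s₂ := by
  have hs₁ : s₁ ∈ Set.Icc (0:ℝ) 1 := ⟨h0.trans h12, h11⟩
  have hs₂ : s₂ ∈ Set.Icc (0:ℝ) 1 := ⟨h0, h12.trans h11⟩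
  have : F μ s₁ - F μ s₂ = ∑' k, (μ k * s₁ ^ k - μ k * s₂ ^ k) := by
    rw [Summable.tsum_sub (hFsummable hs₁) (hFsummable hs₂)]; rfl
  rw [this]
  have hb : ∀ k : ℕ, μ k * s₁ ^ k - μ k * s₂ ^ k ≤ (s₁ - s₂) * ((k:ℝ) * μ k) := by
    intro k
    have := hpow k h0 h12 h11
    have h0k := hnn k
    nlinarith
  calc ∑' k, (μ k * s₁ ^ k - μ k * s₂ ^ k) ≤ ∑' k : ℕ, (s₁ - s₂) * ((k:ℝ) * μ k) :=
        Summable.tsum_le_tsum hb ((hFsummable hs₁).sub (hFsummable hs₂)) (hmean_sum.mul_left _)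
    _ = (s₁ - s₂) * ∑' k : ℕ, (k:ℝ) * μ k := tsum_mul_left
    _ = s₁ - s₂ := by rw [hmean]; ring


lemma F_lt_one' (hnn : ∀ k, 0 ≤ μ k) (hsum : Summable μ) (h1 : ∑' k, μ k = 1)
    {k₀ : ℕ} (hk₀ : 2 ≤ k₀) (hk₀pos : 0 < μ k₀)
    {s : ℝ} (hs : s ∈ Set.Ico (0:ℝ) 1) : F μ s < 1 := by
  have hs' : s ∈ Set.Icc (0:ℝ) 1 := ⟨hs.1, hs.2.le⟩
  have hsub := one_sub_F hnn hsum h1 hs'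
  have hterm : 0 < μ k₀ * (1 - s ^ k₀) :=
    mul_pos hk₀pos (sub_pos.2 (pow_lt_one₀ hs.1 hs.2 (by omega)))
  have hle : μ k₀ * (1 - s ^ k₀) ≤ ∑' k, μ k * (1 - s ^ k) := by
    refine Summable.le_tsum (summable_one_sub_pow hnn hsum hs') k₀ fun k _ => ?_
    exact mul_nonneg (hnn k) (sub_nonneg.2 (pow_le_one₀ hs'.1 hs'.2))
  linarith


lemma tendsto_h_div_sq {μ : ℕ → ℝ} (hnn : ∀ k, 0 ≤ μ k) (hsum : Summable μ)
    (h1 : ∑' k, μ k = 1)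
    (hmean_sum : Summable fun k : ℕ => (k:ℝ) * μ k) (hmean : ∑' k : ℕ, (k:ℝ) * μ k = 1)
    {σ2 : ℝ} (hσ2_summable : Summable (fun k : ℕ => (k : ℝ) * ((k : ℝ) - 1) * μ k))
    (hσ2 : σ2 = ∑' k : ℕ, (k : ℝ) * ((k : ℝ) - 1) * μ k)
    (hFsummable : ∀ {s : ℝ}, s ∈ Set.Icc (0:ℝ) 1 → Summable fun k => μ k * s ^ k)
    (htaylor_lower : ∀ (k : ℕ) {t : ℝ}, t ≤ 2 → 0 ≤ (1 - t) ^ k - 1 + k * t)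
    (htaylor_upper : ∀ (k : ℕ) {t : ℝ}, 0 ≤ t → t ≤ 1 →
      (1 - t) ^ k - 1 + k * t ≤ (k : ℝ) * ((k : ℝ) - 1) / 2 * t ^ 2)
    (htendsto_taylor : ∀ k : ℕ, Tendsto (fun t : ℝ => ((1 - t) ^ k - 1 + k * t) / t ^ 2)
      (nhdsWithin 0 (Set.Ioi 0)) (nhds ((k : ℝ) * ((k : ℝ) - 1) / 2))) :
    Tendsto (fun t : ℝ => (F μ (1 - t) - (1 - t)) / t ^ 2) (nhdsWithin 0 (Set.Ioi 0))
      (nhds (σ2 / 2)) := by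
  -- the tsum form
  have hsum_taylor : ∀ {t : ℝ}, t ∈ Set.Ioc (0:ℝ) 1 →
      Summable fun k : ℕ => μ k * ((1 - t) ^ k - 1 + k * t) := by
    intro t ht
    have h1t : (1 - t) ∈ Set.Icc (0:ℝ) 1 := ⟨by linarith [ht.2], by linarith [ht.1]⟩
    have e : (fun k : ℕ => μ k * ((1 - t) ^ k - 1 + k * t))
        = fun k : ℕ => (μ k * (1 - t) ^ k - μ k) + t * ((k:ℝ) * μ k) := by
      funext k; ring
    rw [e]
    exact ((hFsummable h1t).sub hsum).add (hmean_sum.mul_left t)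
  have key : ∀ {t : ℝ}, t ∈ Set.Ioc (0:ℝ) 1 →
      (F μ (1 - t) - (1 - t)) / t ^ 2
        = ∑' k : ℕ, μ k * ((1 - t) ^ k - 1 + k * t) / t ^ 2 := by
    intro t ht
    have h1t : (1 - t) ∈ Set.Icc (0:ℝ) 1 := ⟨by linarith [ht.2], by linarith [ht.1]⟩
    have e : (fun k : ℕ => μ k * ((1 - t) ^ k - 1 + k * t))
        = fun k : ℕ => (μ k * (1 - t) ^ k - μ k) + t * ((k:ℝ) * μ k) := by
      funext k; ring
    have h2 : ∑' k : ℕ, μ k * ((1 - t) ^ k - 1 + k * t) = F μ (1 - t) - (1 - t) := by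
      rw [e, Summable.tsum_add ((hFsummable h1t).sub hsum) (hmean_sum.mul_left t),
        Summable.tsum_sub (hFsummable h1t) hsum, tsum_mul_left, hmean, h1]
      simp [F]
      ring
    rw [← h2, tsum_div_const]
  -- dominated convergence
  have hbound_summable : Summable fun k : ℕ => μ k * ((k:ℝ) * ((k:ℝ) - 1) / 2) := by
    have := hσ2_summable.div_const 2
    refine this.congr fun k => ?_
    ring
  have hmain : Tendsto (fun t : ℝ => ∑' k : ℕ, μ k * ((1 - t) ^ k - 1 + k * t) / t ^ 2)
      (nhdsWithin 0 (Set.Ioi 0)) (nhds (∑' k : ℕ, μ k * ((k:ℝ) * ((k:ℝ) - 1) / 2))) := by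
    refine tendsto_tsum_of_dominated_convergence hbound_summable (fun k => ?_) ?_
    · have := (htendsto_taylor k).const_mul (μ k)
      refine this.congr fun t => ?_
      rw [mul_div_assoc]
    · filter_upwards [Ioc_mem_nhdsGT_of_mem (Set.mem_Ico.2 ⟨le_refl (0:ℝ), zero_lt_one⟩)]
        with t ht k
      have ht2 : (0:ℝ) < t ^ 2 := pow_pos ht.1 2
      have hlow := htaylor_lower k (by linarith [ht.2] : t ≤ 2)
      have hup := htaylor_upper k ht.1.le ht.2
      have hnonneg : 0 ≤ μ k * ((1 - t) ^ k - 1 + k * t) / t ^ 2 :=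
        div_nonneg (mul_nonneg (hnn k) hlow) ht2.le
      rw [Real.norm_eq_abs, abs_of_nonneg hnonneg]
      rw [div_le_iff₀ ht2]
      have := hnn k
      nlinarith
  have hval : ∑' k : ℕ, μ k * ((k:ℝ) * ((k:ℝ) - 1) / 2) = σ2 / 2 := by
    rw [hσ2, ← tsum_div_const]
    exact tsum_congr fun k => by ring
  rw [hval] at hmain
  refine hmain.congr' ?_
  filter_upwards [Ioc_mem_nhdsGT_of_mem (Set.mem_Ico.2 ⟨le_refl (0:ℝ), zero_lt_one⟩)] with t ht
  exact (key ht).symm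



lemma seq_limit {σ2 : ℝ} (hσ2_pos : 0 < σ2) (a : ℕ → ℝ) (h : ℝ → ℝ)
    (ha_pos : ∀ n, 0 < a n) (ha_le : ∀ n, a n ≤ 1)
    (hrec : ∀ n, a (n+1) = a n - h (a n))
    (hh_pos : ∀ t, 0 < t → t ≤ 1 → 0 < h t)
    (hh_mono : ∀ t₁ t₂, 0 < t₁ → t₁ ≤ t₂ → t₂ ≤ 1 → h t₁ ≤ h t₂)
    (hh_lim : Tendsto (fun t => h t / t ^ 2) (nhdsWithin 0 (Set.Ioi 0)) (nhds (σ2 / 2))) :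
    Tendsto (fun n : ℕ => (n : ℝ) * a n) atTop (nhds (2 / σ2)) := by
  have hanti : Antitone a := by
    apply antitone_nat_of_succ_le
    intro n
    rw [hrec n]
    have := hh_pos (a n) (ha_pos n) (ha_le n)
    linarith
  -- a tends to zero
  have hsmall : ∀ ε : ℝ, 0 < ε → ∃ N, a N < ε := by
    intro ε hε
    by_contra hc
    push_neg at hc
    set ε' := min ε 1 with hε'
    have hε'pos : 0 < ε' := lt_min hε zero_lt_one
    have hε'le : ε' ≤ 1 := min_le_right _ _
    have hδ : 0 < h ε' := hh_pos ε' hε'pos hε'le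
    have hge : ∀ n, ε' ≤ a n := fun n => le_trans (min_le_left _ _) (hc n)
    have hbound : ∀ n : ℕ, a n ≤ a 0 - n * h ε' := by
      intro n
      induction n with
      | zero => simp
      | succ n ih =>
        have hm : h ε' ≤ h (a n) := hh_mono ε' (a n) hε'pos (hge n) (ha_le n)
        rw [hrec n]
        push_cast
        linarith
    obtain ⟨n, hn⟩ := exists_nat_gt (a 0 / h ε')
    have h2 := hbound n
    have h3 := ha_pos n
    rw [div_lt_iff₀ hδ] at hn
    linarith
  have ha0 : Tendsto a atTop (nhds 0) := by
    rw [tendsto_order]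
    constructor
    · intro c hc
      exact Eventually.of_forall fun n => lt_trans hc (ha_pos n)
    · intro c hc
      obtain ⟨N, hN⟩ := hsmall c hc
      filter_upwards [eventually_ge_atTop N] with n hn
      exact lt_of_le_of_lt (hanti hn) hN
  have ha0' : Tendsto a atTop (nhdsWithin 0 (Set.Ioi 0)) :=
    tendsto_nhdsWithin_iff.mpr ⟨ha0, Eventually.of_forall fun n => ha_pos n⟩
  -- the increments of b n = (a n)⁻¹
  set r : ℕ → ℝ := fun n => (a n - a (n+1)) / (a n) ^ 2 with hrdef
  have hr : Tendsto r atTop (nhds (σ2 / 2)) := by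
    have := hh_lim.comp ha0'
    refine this.congr fun n => ?_
    simp only [Function.comp_apply, hrdef, hrec n]
    ring_nf
  have har : Tendsto (fun n => a n * r n) atTop (nhds 0) := by
    have := ha0.mul hr
    simpa using this
  have hfrac : Tendsto (fun n => r n / (1 - a n * r n)) atTop (nhds ((σ2 / 2) / (1 - 0))) :=
    hr.div (tendsto_const_nhds.sub har) (by norm_num)
  set b : ℕ → ℝ := fun n => (a n)⁻¹ with hbdef
  have hkey : ∀ n, 1 - a n * r n = a (n+1) / a n := by
    intro n
    have hne : a n ≠ 0 := (ha_pos n).ne'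
    simp only [hrdef]
    field_simp
    ring
  have hdiffeq : ∀ n, r n / (1 - a n * r n) = b (n+1) - b n := by
    intro n
    have hne : a n ≠ 0 := (ha_pos n).ne'
    have hne1 : a (n+1) ≠ 0 := (ha_pos (n+1)).ne'
    rw [hkey n]
    simp only [hbdef, hrdef]
    field_simp
  have hdiff : Tendsto (fun n => b (n+1) - b n) atTop (nhds (σ2 / 2)) := by
    have h2 : ((σ2 / 2) / ((1:ℝ) - 0)) = σ2 / 2 := by norm_num
    rw [h2] at hfrac
    exact hfrac.congr hdiffeq
  have hces := hdiff.cesaro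
  have htel : (fun n : ℕ => ((n:ℝ))⁻¹ * ∑ i ∈ Finset.range n, (b (i+1) - b i))
      = fun n : ℕ => (b n - b 0) / n := by
    funext n
    rw [Finset.sum_range_sub, inv_mul_eq_div]
  rw [htel] at hces
  have hb0 : Tendsto (fun n : ℕ => b 0 / (n:ℝ)) atTop (nhds 0) :=
    tendsto_const_div_atTop_nhds_zero_nat _
  have hbn : Tendsto (fun n : ℕ => b n / (n:ℝ)) atTop (nhds (σ2 / 2)) := by
    have := hces.add hb0
    rw [add_zero] at this
    refine this.congr fun n => ?_
    ring
  have hfin : Tendsto (fun n : ℕ => (b n / (n:ℝ))⁻¹) atTop (nhds ((σ2 / 2)⁻¹)) :=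
    hbn.inv₀ (by positivity)
  have h2s : ((σ2 / 2)⁻¹ : ℝ) = 2 / σ2 := by rw [inv_div]
  rw [h2s] at hfin
  refine hfin.congr' ?_
  filter_upwards [eventually_ge_atTop 1] with n hn
  have hne : a n ≠ 0 := (ha_pos n).ne'
  have hnn : (n:ℝ) ≠ 0 := Nat.cast_ne_zero.2 (by omega)
  rw [inv_div, hbdef]
  simp only [inv_inv]
  rw [div_eq_mul_inv, inv_inv]




lemma indep_mono {Ω : Type*} {mΩ : MeasurableSpace Ω} {P : Measure Ω}
    {m₁ m₂ m₁' m₂' : MeasurableSpace Ω} (h : Indep m₁ m₂ P) (h1 : m₁' ≤ m₁) (h2 : m₂' ≤ m₂) :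
    Indep m₁' m₂' P := by
  rw [Indep_iff] at h ⊢
  exact fun t1 t2 ht1 ht2 => h t1 t2 (h1 _ ht1) (h2 _ ht2)

theorem prob_part {Ω : Type*} [MeasureSpace Ω] (P : Measure Ω) [IsProbabilityMeasure P]
    (μ : ℕ → ℝ)
    (hF_mem : ∀ {s : ℝ}, s ∈ Set.Icc (0:ℝ) 1 → F μ s ∈ Set.Icc (0:ℝ) 1)
    (L : ℕ → ℕ → Ω → ℕ) (hL_meas : ∀ n i, Measurable (L n i))
    (hL_law : ∀ n i k, (P.map (L n i) {k}).toReal = μ k)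
    (hL_indep : iIndepFun (fun p : ℕ × ℕ => L p.1 p.2) P)
    (Z : ℕ → Ω → ℕ) (hZ0 : ∀ ω, Z 0 ω = 1)
    (hZrec : ∀ n ω, Z (n + 1) ω = ∑ i ∈ Finset.range (Z n ω), L n i ω) :
    ∀ n : ℕ, (P {ω | 0 < Z n ω}).toReal = 1 - (F μ)^[n] 0 := by
  -- σ-algebras
  set M : ℕ × ℕ → MeasurableSpace Ω := fun p => MeasurableSpace.comap (L p.1 p.2) inferInstance
    with hMdef
  have hM_le : ∀ p, M p ≤ (inferInstance : MeasurableSpace Ω) := fun p =>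
    (hL_meas p.1 p.2).comap_le
  have hI : iIndep M P := (iIndepFun_iff_iIndep _ _ _).mp hL_indep
  set G : ℕ → MeasurableSpace Ω := fun n => ⨆ p ∈ {q : ℕ × ℕ | q.1 < n}, M p with hGdef
  have hG_le : ∀ n, G n ≤ (inferInstance : MeasurableSpace Ω) := fun n =>
    iSup₂_le fun p _ => hM_le p
  have hG_mono : ∀ {n m : ℕ}, n ≤ m → G n ≤ G m := by
    intro n m hnm
    exact biSup_mono fun p hp => lt_of_lt_of_le hp hnm
  have hL_G : ∀ n i m, n < m → Measurable[G m] (L n i) := by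
    intro n i m hnm
    refine Measurable.of_comap_le ?_
    exact le_biSup M (show ((n, i) : ℕ × ℕ) ∈ {q : ℕ × ℕ | q.1 < m} from hnm)
  -- measurability of Z
  have hZ_meas : ∀ n, Measurable[G n] (Z n) := by
    intro n
    induction n with
    | zero =>
      have : Z 0 = fun _ => 1 := funext hZ0
      rw [this]
      exact measurable_const
    | succ n ih =>
      refine @measurable_to_countable' ℕ Ω _ _ (G (n+1)) (Z (n+1)) fun m => ?_
      have hset : Z (n+1) ⁻¹' {m} = ⋃ j : ℕ, ((Z n ⁻¹' {j}) ∩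
          ((fun ω => ∑ i ∈ Finset.range j, L n i ω) ⁻¹' {m})) := by
        ext ω
        simp only [Set.mem_preimage, Set.mem_singleton_iff, Set.mem_iUnion, Set.mem_inter_iff,
          hZrec n ω]
        constructor
        · intro hm; exact ⟨Z n ω, rfl, hm⟩
        · rintro ⟨j, rfl, hm⟩; exact hm
      rw [hset]
      refine MeasurableSet.iUnion fun j => MeasurableSet.inter ?_ ?_
      · exact hG_mono (Nat.le_succ n) _ (ih (measurableSet_singleton j))
      · have hs : Measurable[G (n+1)] (fun ω => ∑ i ∈ Finset.range j, L n i ω) :=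
          Finset.measurable_sum _ (fun i _ => hL_G n i (n+1) (Nat.lt_succ_self n))
        exact hs (measurableSet_singleton m)
  have hZm : ∀ n, Measurable (Z n) := fun n => (hZ_meas n).mono (hG_le n) le_rfl
  -- integrability helper
  have hIntP : ∀ (g : Ω → ℝ), Measurable g → (∀ ω, |g ω| ≤ 1) → Integrable g P := by
    intro g hg hb
    exact (integrable_const (1:ℝ)).mono' hg.aestronglyMeasurable
      (Filter.Eventually.of_forall fun ω => by simpa using hb ω)
  -- one-step expectation
  have hExp : ∀ (n i : ℕ) {s : ℝ}, s ∈ Set.Icc (0:ℝ) 1 → ∫ ω, s ^ L n i ω ∂P = F μ s := by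
    intro n i s hs
    have hmap : IsProbabilityMeasure (P.map (L n i)) :=
      Measure.isProbabilityMeasure_map (hL_meas n i).aemeasurable
    have hint : Integrable (fun k : ℕ => s ^ k) (P.map (L n i)) := by
      refine (integrable_const (1:ℝ)).mono'
        (Measurable.of_discrete (f := fun k : ℕ => s ^ k)).aestronglyMeasurable
        (Filter.Eventually.of_forall fun k => ?_)
      rw [Real.norm_eq_abs, abs_of_nonneg (pow_nonneg hs.1 k)]
      exact pow_le_one₀ hs.1 hs.2
    calc ∫ ω, s ^ L n i ω ∂P = ∫ k, s ^ k ∂(P.map (L n i)) :=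
          (integral_map (hL_meas n i).aemeasurable
            (Measurable.of_discrete (f := fun k : ℕ => s ^ k)).aestronglyMeasurable).symm
      _ = ∑' k, (P.map (L n i) {k}).toReal • s ^ k := integral_countable' hint
      _ = F μ s := by
          simp only [hL_law n i, smul_eq_mul]
          rfl
  -- product measurability and bounds
  have hprod_meas : ∀ (n j : ℕ) (s : ℝ),
      Measurable (fun ω => ∏ i ∈ Finset.range j, s ^ L n i ω) := by
    intro n j s
    exact Finset.measurable_prod _ fun i _ =>
      (Measurable.of_discrete (f := fun k : ℕ => s ^ k)).comp (hL_meas n i)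
  have hprod_bd : ∀ (n j : ℕ) {s : ℝ}, s ∈ Set.Icc (0:ℝ) 1 → ∀ ω,
      |∏ i ∈ Finset.range j, s ^ L n i ω| ≤ 1 := by
    intro n j s hs ω
    rw [abs_of_nonneg (Finset.prod_nonneg fun i _ => pow_nonneg hs.1 _)]
    exact Finset.prod_le_one (fun i _ => pow_nonneg hs.1 _)
      (fun i _ => pow_le_one₀ hs.1 hs.2)
  -- the key independence computation
  have hkey : ∀ (n : ℕ) (A : Set Ω), MeasurableSet[G n] A → ∀ {s : ℝ}, s ∈ Set.Icc (0:ℝ) 1 →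
      ∀ j, ∫ ω, Set.indicator A (fun _ => (1:ℝ)) ω * ∏ i ∈ Finset.range j, s ^ L n i ω ∂P
        = (P A).toReal * (F μ s) ^ j := by
    intro n A hA s hs j
    have hAm : MeasurableSet A := hG_le n _ hA
    induction j with
    | zero =>
      simp only [Finset.range_zero, Finset.prod_empty, mul_one, pow_zero]
      rw [integral_indicator_const (1:ℝ) hAm, smul_eq_mul, mul_one, Measure.real_def]
    | succ j ih =>
      set S₁ : Set (ℕ × ℕ) := {q : ℕ × ℕ | q.1 < n} ∪ {q : ℕ × ℕ | q.1 = n ∧ q.2 < j} with hS₁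
      set X : Ω → ℝ := fun ω => Set.indicator A (fun _ => (1:ℝ)) ω *
        ∏ i ∈ Finset.range j, s ^ L n i ω with hX
      set Y : Ω → ℝ := fun ω => s ^ L n j ω with hY
      have hXmeas₀ : Measurable[⨆ p ∈ S₁, M p] X := by
        refine Measurable.mul ?_ ?_
        · refine (measurable_const.indicator ?_)
          exact (biSup_mono (fun p hp => Or.inl hp) : G n ≤ ⨆ p ∈ S₁, M p) _ hA
        · refine Finset.measurable_prod _ fun i hi => ?_
          refine (Measurable.of_discrete (f := fun k : ℕ => s ^ k)).comp ?_
          refine Measurable.of_comap_le ?_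
          exact le_biSup M (show ((n, i) : ℕ × ℕ) ∈ S₁ from Or.inr ⟨rfl, Finset.mem_range.mp hi⟩)
      have hYmeas₀ : Measurable[M (n, j)] Y :=
        (Measurable.of_discrete (f := fun k : ℕ => s ^ k)).comp (Measurable.of_comap_le le_rfl)
      have hdisj : Disjoint S₁ ({(n, j)} : Set (ℕ × ℕ)) := by
        rw [Set.disjoint_left]
        rintro p hp rfl
        rcases hp with hp | hp
        · exact absurd hp (lt_irrefl n)
        · exact absurd hp.2 (lt_irrefl j)
      have hsingle : (⨆ p ∈ ({(n, j)} : Set (ℕ × ℕ)), M p) = M (n, j) := by simp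
      have hIndepMS : Indep (⨆ p ∈ S₁, M p) (M (n, j)) P := by
        rw [← hsingle]
        exact indep_iSup_of_disjoint hM_le hI hdisj
      have hXmeas : Measurable X := hXmeas₀.mono (iSup₂_le fun p _ => hM_le p) le_rfl
      have hYmeas : Measurable Y := hYmeas₀.mono (hM_le _) le_rfl
      have hIndepF : IndepFun X Y P := by
        rw [IndepFun_iff_Indep]
        exact indep_mono hIndepMS hXmeas₀.comap_le hYmeas₀.comap_le
      have hmul := hIndepF.integral_fun_mul_eq_mul_integral hXmeas.aestronglyMeasurable hYmeas.aestronglyMeasurable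
      have harr : (fun ω => Set.indicator A (fun _ => (1:ℝ)) ω *
          ∏ i ∈ Finset.range (j+1), s ^ L n i ω) = fun ω => X ω * Y ω := by
        funext ω
        rw [hX, hY, Finset.prod_range_succ, mul_assoc]
      rw [harr, hmul, ih, hExp n j hs, pow_succ, mul_assoc]
  -- partition over values of Z n
  have hpart : ∀ (n : ℕ) (g : Ω → ℝ), Measurable g → (∀ ω, |g ω| ≤ 1) →
      HasSum (fun j : ℕ => ∫ ω in Z n ⁻¹' {j}, g ω ∂P) (∫ ω, g ω ∂P) := by
    intro n g hgm hgb
    have hU : (⋃ j : ℕ, Z n ⁻¹' {j}) = Set.univ := by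
      ext ω; simp
    have hd : Pairwise (Function.onFun Disjoint fun j : ℕ => Z n ⁻¹' {j}) := by
      intro i j hij
      rw [Function.onFun, Set.disjoint_left]
      intro ω h1 h2
      simp only [Set.mem_preimage, Set.mem_singleton_iff] at h1 h2
      exact hij (h1 ▸ h2 ▸ rfl)
    have := hasSum_integral_iUnion (fun j => (hZm n) (measurableSet_singleton j)) hd
      ((hIntP g hgm hgb).integrableOn (s := ⋃ j, Z n ⁻¹' {j}))
    rwa [hU, Measure.restrict_univ] at this
  -- the generating function recursion
  have hGstep : ∀ (n : ℕ) {s : ℝ}, s ∈ Set.Icc (0:ℝ) 1 →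
      ∫ ω, s ^ Z (n+1) ω ∂P = ∫ ω, (F μ s) ^ Z n ω ∂P := by
    intro n s hs
    have hFs := hF_mem hs
    have hg1m : Measurable (fun ω => s ^ Z (n+1) ω) :=
      (Measurable.of_discrete (f := fun k : ℕ => s ^ k)).comp (hZm (n+1))
    have hg1b : ∀ ω, |s ^ Z (n+1) ω| ≤ 1 := fun ω => by
      rw [abs_of_nonneg (pow_nonneg hs.1 _)]; exact pow_le_one₀ hs.1 hs.2
    have hg2m : Measurable (fun ω => (F μ s) ^ Z n ω) :=
      (Measurable.of_discrete (f := fun k : ℕ => (F μ s) ^ k)).comp (hZm n)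
    have hg2b : ∀ ω, |(F μ s) ^ Z n ω| ≤ 1 := fun ω => by
      rw [abs_of_nonneg (pow_nonneg hFs.1 _)]; exact pow_le_one₀ hFs.1 hFs.2
    have h1 := hpart n _ hg1m hg1b
    have h2 := hpart n _ hg2m hg2b
    have heq : ∀ j : ℕ, ∫ ω in Z n ⁻¹' {j}, s ^ Z (n+1) ω ∂P
        = ∫ ω in Z n ⁻¹' {j}, (F μ s) ^ Z n ω ∂P := by
      intro j
      have hEj : MeasurableSet (Z n ⁻¹' {j}) := (hZm n) (measurableSet_singleton j)
      have e1 : ∫ ω in Z n ⁻¹' {j}, s ^ Z (n+1) ω ∂P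
          = ∫ ω in Z n ⁻¹' {j}, (∏ i ∈ Finset.range j, s ^ L n i ω) ∂P := by
        refine setIntegral_congr_fun hEj fun ω hω => ?_
        have hω' : Z n ω = j := hω
        rw [hZrec n ω, hω', Finset.prod_pow_eq_pow_sum]
      have e2 : ∫ ω in Z n ⁻¹' {j}, (∏ i ∈ Finset.range j, s ^ L n i ω) ∂P
          = ∫ ω, Set.indicator (Z n ⁻¹' {j}) (fun _ => (1:ℝ)) ω *
              ∏ i ∈ Finset.range j, s ^ L n i ω ∂P := by
        rw [← integral_indicator hEj]
        congr 1
        funext ω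
        by_cases hω : ω ∈ Z n ⁻¹' {j} <;> simp [Set.indicator_apply, hω]
      have e3 : ∫ ω in Z n ⁻¹' {j}, (F μ s) ^ Z n ω ∂P
          = (P (Z n ⁻¹' {j})).toReal • (F μ s) ^ j := by
        rw [setIntegral_congr_fun hEj (g := fun _ => (F μ s) ^ j) fun ω hω => by
          have hω' : Z n ω = j := hω
          rw [hω']]
        exact setIntegral_const _
      rw [e1, e2, e3,
        hkey n (Z n ⁻¹' {j}) (hZ_meas n (measurableSet_singleton j)) hs j, smul_eq_mul]
    rw [funext heq] at h1
    exact h1.unique h2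
  -- the generating function formula
  have hGfun : ∀ (n : ℕ) {s : ℝ}, s ∈ Set.Icc (0:ℝ) 1 →
      ∫ ω, s ^ Z n ω ∂P = (F μ)^[n] s := by
    intro n
    induction n with
    | zero =>
      intro s hs
      have : (fun ω => s ^ Z 0 ω) = fun _ => s := by
        funext ω; rw [hZ0 ω, pow_one]
      rw [this, Function.iterate_zero_apply, integral_const, probReal_univ,
        one_smul]
    | succ n ih =>
      intro s hs
      rw [hGstep n hs, ih (hF_mem hs), ← Function.iterate_succ_apply]
  -- extinction probability
  intro n
  have hq : (P (Z n ⁻¹' {0})).toReal = (F μ)^[n] 0 := by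
    have h0 : (0:ℝ) ∈ Set.Icc (0:ℝ) 1 := ⟨le_refl 0, zero_le_one⟩
    have := hGfun n h0
    classical
    have heq : (fun ω => (0:ℝ) ^ Z n ω) = Set.indicator (Z n ⁻¹' {0}) (fun _ => (1:ℝ)) := by
      funext ω
      by_cases hω : Z n ω = 0
      · simp [hω, Set.indicator_apply, Set.mem_preimage]
      · rw [zero_pow hω, Set.indicator_apply]
        simp [Set.mem_preimage, hω]
    rw [heq] at this
    rw [← this, integral_indicator_const (1:ℝ) ((hZm n) (measurableSet_singleton 0)),
      smul_eq_mul, mul_one, Measure.real_def]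
  have hcompl : {ω | 0 < Z n ω} = (Z n ⁻¹' {0})ᶜ := by
    ext ω
    simp [Nat.pos_iff_ne_zero]
  rw [hcompl, measure_compl ((hZm n) (measurableSet_singleton 0)) (measure_ne_top P _),
    measure_univ, ENNReal.toReal_sub_of_le prob_le_one ENNReal.one_ne_top, ENNReal.toReal_one, hq]


end GW12

open GW12

theorem stmt_12 {Ω : Type*} [MeasureSpace Ω] (P : Measure Ω) [IsProbabilityMeasure P]
    (μ : ℕ → ℝ) (hμ_nonneg : ∀ k, 0 ≤ μ k) (hμ_sum : ∑' k : ℕ, μ k = 1)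
    (hμ_mean : ∑' k : ℕ, (k : ℝ) * μ k = 1)
    (σ2 : ℝ) (hσ2_pos : 0 < σ2)
    (hσ2_summable : Summable (fun k : ℕ => (k : ℝ) * ((k : ℝ) - 1) * μ k))
    (hσ2 : σ2 = ∑' k : ℕ, (k : ℝ) * ((k : ℝ) - 1) * μ k)
    (L : ℕ → ℕ → Ω → ℕ) (hL_meas : ∀ n i, Measurable (L n i))
    (hL_law : ∀ n i k, (P.map (L n i) {k}).toReal = μ k)
    (hL_indep : iIndepFun (fun p : ℕ × ℕ => L p.1 p.2) P)
    (Z : ℕ → Ω → ℕ) (hZ0 : ∀ ω, Z 0 ω = 1)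
    (hZrec : ∀ n ω, Z (n + 1) ω = ∑ i ∈ Finset.range (Z n ω), L n i ω) :
    Tendsto (fun n : ℕ => (n : ℝ) * (P {ω | 0 < Z n ω}).toReal) atTop (nhds (2 / σ2)) := by
  have hsum : Summable μ := summable_of_tsum_eq_one hμ_sum
  have hmean_sum : Summable (fun k : ℕ => (k : ℝ) * μ k) := summable_of_tsum_eq_one hμ_mean
  have hF_mem : ∀ {s : ℝ}, s ∈ Set.Icc (0:ℝ) 1 → F μ s ∈ Set.Icc (0:ℝ) 1 := fun hs =>
    ⟨F_nonneg hμ_nonneg hs, F_le_one hμ_nonneg hsum hμ_sum hs⟩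
  have hprob := prob_part P μ hF_mem L hL_meas hL_law hL_indep Z hZ0 hZrec
  obtain ⟨k₀, hk₀, hk₀pos⟩ := exists_big hμ_nonneg hσ2_summable hσ2_pos hσ2
  -- the iterate sequence
  have hq_mem : ∀ n : ℕ, (F μ)^[n] 0 ∈ Set.Ico (0:ℝ) 1 := by
    intro n
    induction n with
    | zero => exact ⟨le_refl 0, zero_lt_one⟩
    | succ n ih =>
      rw [Function.iterate_succ_apply']
      have h1 : (F μ)^[n] 0 ∈ Set.Icc (0:ℝ) 1 := ⟨ih.1, ih.2.le⟩
      exact ⟨F_nonneg hμ_nonneg h1, F_lt_one' hμ_nonneg hsum hμ_sum hk₀ hk₀pos ih⟩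
  set a : ℕ → ℝ := fun n => 1 - (F μ)^[n] 0 with ha
  set h : ℝ → ℝ := fun t => F μ (1 - t) - (1 - t) with hh
  have ha_pos : ∀ n, 0 < a n := fun n => sub_pos.2 (hq_mem n).2
  have ha_le : ∀ n, a n ≤ 1 := fun n => by
    have := (hq_mem n).1
    simp only [ha]
    linarith
  have hrec : ∀ n, a (n + 1) = a n - h (a n) := by
    intro n
    simp only [ha, hh]
    rw [Function.iterate_succ_apply']
    have hx : 1 - (1 - (F μ)^[n] 0) = (F μ)^[n] 0 := by ring
    rw [hx]
    ring
  have hh_pos : ∀ t, 0 < t → t ≤ 1 → 0 < h t := by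
    intro t ht0 ht1
    have hs : (1 - t) ∈ Set.Ico (0:ℝ) 1 := ⟨by linarith, by linarith⟩
    have := F_gt_self hμ_nonneg hsum hμ_sum hmean_sum hμ_mean
      (fun hs => one_sub_F hμ_nonneg hsum hμ_sum hs)
      (fun hs => summable_one_sub_pow hμ_nonneg hsum hs)
      (fun k s hs0 hs1 => one_sub_pow_le k hs0 hs1)
      (fun hs0 hs1 k hk => one_sub_pow_lt hs0 hs1 k hk)
      hk₀ hk₀pos hs
    simp only [hh]
    linarith
  have hh_mono : ∀ t₁ t₂, 0 < t₁ → t₁ ≤ t₂ → t₂ ≤ 1 → h t₁ ≤ h t₂ := by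
    intro t₁ t₂ ht₁ h12 ht₂
    have := F_lipschitz hμ_nonneg hsum hmean_sum hμ_mean
      (fun hs => F_summable hμ_nonneg hsum hs)
      (fun k a b hb hab ha1 => pow_sub_pow_le k hb hab ha1)
      (show (0:ℝ) ≤ 1 - t₂ by linarith) (show 1 - t₂ ≤ 1 - t₁ by linarith)
      (show 1 - t₁ ≤ 1 by linarith)
    simp only [hh]
    linarith
  have hh_lim : Tendsto (fun t => h t / t ^ 2) (nhdsWithin 0 (Set.Ioi 0)) (nhds (σ2 / 2)) := by
    simp only [hh]
    exact tendsto_h_div_sq hμ_nonneg hsum hμ_sum hmean_sum hμ_mean hσ2_summable hσ2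
      (fun hs => F_summable hμ_nonneg hsum hs)
      (fun k t ht => taylor_lower k ht)
      (fun k t ht0 ht1 => taylor_upper k ht0 ht1)
      tendsto_taylor
  have hfinal := seq_limit hσ2_pos a h ha_pos ha_le hrec hh_pos hh_mono hh_lim
  refine hfinal.congr fun n => ?_
  rw [hprob n]
end

section
/- Let X be a nonnegative, infinitely divisible random variable with a = E[X] ∈ (0,∞), and suppose Ẋ =ᵈ X + A where Ẋ is the X-size-biased transform of X and A is a strictly positive random variable independent of X. Then for all λ ≥ 0, -ln E[e^{-λX}] = a ∫₀^λ E[e^{-sA}] ds. -/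
open MeasureTheory ProbabilityTheory

/-- `n`-fold convolution power of a measure on `ℝ`. -/
noncomputable def convIter (ρ : Measure ℝ) : ℕ → Measure ℝ
  | 0 => Measure.dirac 0
  | n + 1 => Measure.conv (convIter ρ n) ρ

lemma aux_mul_exp_le (u : ℝ) : u * Real.exp (-u) ≤ Real.exp (-1) := by
  have h : u ≤ Real.exp (u - 1) := by
    have := Real.add_one_le_exp (u - 1); linarith
  calc u * Real.exp (-u) ≤ Real.exp (u - 1) * Real.exp (-u) :=
        mul_le_mul_of_nonneg_right h (Real.exp_pos _).le
    _ = Real.exp (-1) := by rw [← Real.exp_add]; ring_nf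

lemma aux_mul_exp_le' {c x : ℝ} (hc : 0 < c) (hx : 0 ≤ x) :
    x * Real.exp (-(c * x)) ≤ c⁻¹ * Real.exp (-1) := by
  have h := aux_mul_exp_le (c * x)
  have := mul_le_mul_of_nonneg_left h (le_of_lt (inv_pos.mpr hc))
  calc x * Real.exp (-(c * x)) = c⁻¹ * (c * x * Real.exp (-(c * x))) := by
        field_simp
    _ ≤ c⁻¹ * Real.exp (-1) := this

theorem stmt_14 {Ω : Type*} [MeasureSpace Ω] (P : Measure Ω) [IsProbabilityMeasure P]
    (X A : Ω → ℝ) (hX : Measurable X) (hA : Measurable A)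
    (hX_nonneg : ∀ ω, 0 ≤ X ω) (hA_pos : ∀ᵐ ω ∂P, 0 < A ω)
    (hX_int : Integrable X P) (a : ℝ) (ha : 0 < a) (ha_eq : ∫ ω, X ω ∂P = a)
    (h_infdiv : ∀ n : ℕ, 0 < n → ∃ ρ : Measure ℝ,
      IsProbabilityMeasure ρ ∧ P.map X = convIter ρ n)
    (h_indep : IndepFun X A P)
    (h_sb : P.map (fun ω => X ω + A ω) = sizeBiasedLaw (P.map X) a) :
    ∀ l : ℝ, 0 ≤ l →
      -Real.log (∫ ω, Real.exp (-l * X ω) ∂P) =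
        a * ∫ s in (0:ℝ)..l, ∫ ω, Real.exp (-s * A ω) ∂P := by
  intro l hl
  set Φ : ℝ → ℝ := fun s => ∫ ω, Real.exp (-s * X ω) ∂P with hΦdef
  set Ψ : ℝ → ℝ := fun s => ∫ ω, Real.exp (-s * A ω) ∂P with hΨdef
  -- integrability of the exponentials
  have hIX : ∀ s : ℝ, 0 ≤ s → Integrable (fun ω => Real.exp (-s * X ω)) P := by
    intro s hs
    refine Integrable.mono' (integrable_const 1)
      ((hX.const_mul (-s)).exp.aestronglyMeasurable) ?_
    filter_upwards with ω
    rw [Real.norm_eq_abs, Real.abs_exp]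
    apply Real.exp_le_one_iff.mpr
    have := mul_nonneg hs (hX_nonneg ω); linarith
  have hIA : ∀ s : ℝ, 0 ≤ s → Integrable (fun ω => Real.exp (-s * A ω)) P := by
    intro s hs
    refine Integrable.mono' (integrable_const 1)
      ((hA.const_mul (-s)).exp.aestronglyMeasurable) ?_
    filter_upwards [hA_pos] with ω hω
    rw [Real.norm_eq_abs, Real.abs_exp]
    apply Real.exp_le_one_iff.mpr
    have := mul_nonneg hs hω.le; linarith
  -- positivity of Φ
  have hΦpos : ∀ s : ℝ, 0 ≤ s → 0 < Φ s := by
    intro s hs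
    rw [hΦdef]
    rw [integral_pos_iff_support_of_nonneg (fun ω => (Real.exp_pos _).le) (hIX s hs)]
    have : Function.support (fun ω => Real.exp (-s * X ω)) = Set.univ := by
      ext ω; simp [Function.mem_support, (Real.exp_pos _).ne']
    rw [this]; simp
  -- the key identity coming from the size-bias relation and independence
  have hkey : ∀ s : ℝ, 0 ≤ s →
      ∫ ω, X ω * Real.exp (-s * X ω) ∂P = a * (Φ s * Ψ s) := by
    intro s hs
    have hes : Measurable fun x : ℝ => Real.exp (-s * x) :=
      (measurable_id.const_mul (-s)).exp
    -- left side via the map of X + A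
    have h1 : ∫ y, Real.exp (-s * y) ∂(P.map (fun ω => X ω + A ω))
        = ∫ ω, Real.exp (-s * (X ω + A ω)) ∂P :=
      integral_map (hX.add hA).aemeasurable hes.aestronglyMeasurable
    -- left side via the size-biased law
    have h2 : ∫ y, Real.exp (-s * y) ∂(sizeBiasedLaw (P.map X) a)
        = a⁻¹ * ∫ ω, X ω * Real.exp (-s * X ω) ∂P := by
      rw [sizeBiasedLaw, integral_smul_measure]
      have hwd : (P.map X).withDensity (fun x => ENNReal.ofReal x)
          = (P.map X).withDensity (fun x => (Real.toNNReal x : ENNReal)) := rfl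
      rw [hwd, integral_withDensity_eq_integral_smul measurable_real_toNNReal]
      simp only [NNReal.smul_def, smul_eq_mul]
      have h3 : ∫ y, (Real.toNNReal y : ℝ) * Real.exp (-s * y) ∂(P.map X)
          = ∫ ω, (Real.toNNReal (X ω) : ℝ) * Real.exp (-s * X ω) ∂P :=
        integral_map hX.aemeasurable
          ((measurable_real_toNNReal.coe_nnreal_real.mul hes).aestronglyMeasurable)
      rw [h3]
      have h4 : ∀ ω, (Real.toNNReal (X ω) : ℝ) * Real.exp (-s * X ω)
          = X ω * Real.exp (-s * X ω) := by
        intro ω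
        rw [Real.coe_toNNReal _ (hX_nonneg ω)]
      rw [integral_congr_ae (Filter.Eventually.of_forall h4)]
      have : ((ENNReal.ofReal a)⁻¹).toReal = a⁻¹ := by
        rw [ENNReal.toReal_inv, ENNReal.toReal_ofReal ha.le]
      rw [this]
    -- independence
    have h5 : ∫ ω, Real.exp (-s * (X ω + A ω)) ∂P = Φ s * Ψ s := by
      have hcomp : IndepFun (fun ω => Real.exp (-s * X ω))
          (fun ω => Real.exp (-s * A ω)) P := h_indep.comp hes hes
      have h6 := hcomp.integral_fun_mul_eq_mul_integral
        ((hX.const_mul (-s)).exp.aestronglyMeasurable)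
        ((hA.const_mul (-s)).exp.aestronglyMeasurable)
      have h7 : ∀ ω, Real.exp (-s * (X ω + A ω))
          = Real.exp (-s * X ω) * Real.exp (-s * A ω) := by
        intro ω; rw [← Real.exp_add]; ring_nf
      calc ∫ ω, Real.exp (-s * (X ω + A ω)) ∂P
          = ∫ ω, Real.exp (-s * X ω) * Real.exp (-s * A ω) ∂P :=
            integral_congr_ae (Filter.Eventually.of_forall h7)
        _ = Φ s * Ψ s := h6
    have h8 : a⁻¹ * ∫ ω, X ω * Real.exp (-s * X ω) ∂P = Φ s * Ψ s := by
      rw [← h2, ← h_sb, h1, h5]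
    calc ∫ ω, X ω * Real.exp (-s * X ω) ∂P
        = a * (a⁻¹ * ∫ ω, X ω * Real.exp (-s * X ω) ∂P) := by
          rw [← mul_assoc, mul_inv_cancel₀ ha.ne', one_mul]
      _ = a * (Φ s * Ψ s) := by rw [h8]
  -- truncated versions, continuous on all of ℝ
  set Φm : ℝ → ℝ := fun s => ∫ ω, Real.exp (-(max s 0) * X ω) ∂P with hΦmdef
  set Ψm : ℝ → ℝ := fun s => ∫ ω, Real.exp (-(max s 0) * A ω) ∂P with hΨmdef
  have hΦm_eq : ∀ s : ℝ, 0 ≤ s → Φm s = Φ s := by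
    intro s hs; rw [hΦmdef, hΦdef]; simp [max_eq_left hs]
  have hΨm_eq : ∀ s : ℝ, 0 ≤ s → Ψm s = Ψ s := by
    intro s hs; rw [hΨmdef, hΨdef]; simp [max_eq_left hs]
  have hΦm_cont : Continuous Φm := by
    apply continuous_of_dominated (bound := fun _ => (1 : ℝ))
    · intro s
      exact ((hX.const_mul (-(max s 0))).exp).aestronglyMeasurable
    · intro s
      filter_upwards with ω
      rw [Real.norm_eq_abs, Real.abs_exp]
      apply Real.exp_le_one_iff.mpr
      have := mul_nonneg (le_max_right s 0) (hX_nonneg ω); linarith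
    · exact integrable_const 1
    · filter_upwards with ω
      exact (((continuous_id.max continuous_const).neg.mul continuous_const).rexp)
  have hΨm_cont : Continuous Ψm := by
    apply continuous_of_dominated (bound := fun _ => (1 : ℝ))
    · intro s
      exact ((hA.const_mul (-(max s 0))).exp).aestronglyMeasurable
    · intro s
      filter_upwards [hA_pos] with ω hω
      rw [Real.norm_eq_abs, Real.abs_exp]
      apply Real.exp_le_one_iff.mpr
      have := mul_nonneg (le_max_right s 0) hω.le; linarith
    · exact integrable_const 1
    · filter_upwards with ω
      exact (((continuous_id.max continuous_const).neg.mul continuous_const).rexp)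
  -- derivative of Φ at interior points
  have hΦderiv : ∀ s₀ : ℝ, 0 < s₀ →
      HasDerivAt Φ (∫ ω, -(X ω * Real.exp (-s₀ * X ω)) ∂P) s₀ := by
    intro s₀ hs₀
    have hε : (0:ℝ) < s₀ / 2 := by linarith
    have := hasDerivAt_integral_of_dominated_loc_of_deriv_le (μ := P)
      (F := fun s ω => Real.exp (-s * X ω))
      (F' := fun s ω => -(X ω * Real.exp (-s * X ω)))
      (x₀ := s₀) (s := Metric.ball s₀ (s₀ / 2))
      (bound := fun _ => (s₀ / 2)⁻¹ * Real.exp (-1)) (Metric.ball_mem_nhds s₀ hε)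
      ?_ ?_ ?_ ?_ ?_ ?_
    · exact this.2
    · filter_upwards with s
      exact ((hX.const_mul (-s)).exp).aestronglyMeasurable
    · exact hIX s₀ hs₀.le
    · exact ((hX.mul (hX.const_mul (-s₀)).exp).neg).aestronglyMeasurable
    · filter_upwards with ω
      intro x hx
      rw [Metric.mem_ball, Real.dist_eq, abs_lt] at hx
      have hxge : s₀ / 2 ≤ x := by linarith
      rw [norm_neg, Real.norm_eq_abs, abs_mul, Real.abs_exp,
        abs_of_nonneg (hX_nonneg ω)]
      have h1 : Real.exp (-x * X ω) ≤ Real.exp (-(s₀ / 2 * X ω)) := by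
        apply Real.exp_le_exp.mpr
        have := mul_le_mul_of_nonneg_right hxge (hX_nonneg ω)
        nlinarith
      calc X ω * Real.exp (-x * X ω) ≤ X ω * Real.exp (-(s₀ / 2 * X ω)) :=
            mul_le_mul_of_nonneg_left h1 (hX_nonneg ω)
        _ ≤ (s₀ / 2)⁻¹ * Real.exp (-1) := aux_mul_exp_le' hε (hX_nonneg ω)
    · exact integrable_const _
    · filter_upwards with ω
      intro x _
      have h1 : HasDerivAt (fun y : ℝ => -y * X ω) (-X ω) x := by
        simpa using ((hasDerivAt_id x).neg.mul_const (X ω))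
      have h2 := h1.exp
      exact h2.congr_deriv (by ring)
  -- the function whose derivative we compute
  set f : ℝ → ℝ := fun s => -Real.log (Φm s) with hfdef
  have hf_cont : ContinuousOn f (Set.Icc 0 l) := by
    apply ContinuousOn.neg
    apply ContinuousOn.log hΦm_cont.continuousOn
    intro s hs
    rw [hΦm_eq s hs.1]
    exact (hΦpos s hs.1).ne'
  have hf_deriv : ∀ s₀ ∈ Set.Ioo (0:ℝ) l,
      HasDerivWithinAt f (a * Ψm s₀) (Set.Ioi s₀) s₀ := by
    intro s₀ hs₀
    have hpos := hΦpos s₀ hs₀.1.le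
    have hd := hΦderiv s₀ hs₀.1
    have hint : ∫ ω, -(X ω * Real.exp (-s₀ * X ω)) ∂P
        = -(a * (Φ s₀ * Ψ s₀)) := by
      rw [integral_neg, hkey s₀ hs₀.1.le]
    rw [hint] at hd
    have hlog : HasDerivAt (fun s => -Real.log (Φ s))
        (-(-(a * (Φ s₀ * Ψ s₀)) / Φ s₀)) s₀ := (hd.log hpos.ne').neg
    have heq : -(-(a * (Φ s₀ * Ψ s₀)) / Φ s₀) = a * Ψm s₀ := by
      rw [hΨm_eq s₀ hs₀.1.le]
      field_simp
    rw [heq] at hlog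
    have hev : (fun s => -Real.log (Φ s)) =ᶠ[nhds s₀] f := by
      have : Set.Ioi (0:ℝ) ∈ nhds s₀ := Ioi_mem_nhds hs₀.1
      filter_upwards [this] with s hs
      rw [hfdef]
      simp only
      rw [hΦm_eq s (le_of_lt hs)]
    exact (hlog.congr_of_eventuallyEq hev.symm).hasDerivWithinAt
  have hf'_int : IntervalIntegrable (fun s => a * Ψm s) MeasureTheory.volume 0 l :=
    (continuous_const.mul hΨm_cont).intervalIntegrable 0 l
  have hftc := intervalIntegral.integral_eq_sub_of_hasDeriv_right_of_le hl
    hf_cont hf_deriv hf'_int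
  have hf0 : f 0 = 0 := by
    rw [hfdef]
    simp only
    rw [hΦm_eq 0 le_rfl, hΦdef]
    simp
  have hfl : f l = -Real.log (Φ l) := by
    rw [hfdef]; simp only; rw [hΦm_eq l hl]
  rw [hf0, hfl, sub_zero] at hftc
  have hcongr : ∫ s in (0:ℝ)..l, Ψm s = ∫ s in (0:ℝ)..l, Ψ s := by
    apply intervalIntegral.integral_congr
    intro s hs
    rw [Set.uIcc_of_le hl] at hs
    exact hΨm_eq s hs.1
  rw [intervalIntegral.integral_const_mul, hcongr] at hftc
  show -Real.log (Φ l) = a * ∫ s in (0:ℝ)..l, Ψ s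
  exact hftc.symm
end

section
/- Let X_n, X be nonnegative random variables with E[X_n] = E[X] = a ∈ (0,∞) for all n, and suppose the Laplace transforms of the size-biased transforms converge pointwise: E[X_n e^{-λX_n}]/a → E[X e^{-λX}]/a for every λ ≥ 0. Then E[e^{-λX_n}] → E[e^{-λX}] for every λ ≥ 0, i.e., X_n converges to X in distribution. -/
open MeasureTheory ProbabilityTheory Filter Set

section aux

variable {Ω : Type*} [MeasureSpace Ω] {P : Measure Ω} [IsProbabilityMeasure P]

lemma exp_integrable (Y : Ω → ℝ) (hm : Measurable Y) (h0 : ∀ ω, 0 ≤ Y ω)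
    {s : ℝ} (hs : 0 ≤ s) : Integrable (fun ω => Real.exp (-s * Y ω)) P := by
  refine (integrable_const (1:ℝ)).mono' ?_ ?_
  · exact (by fun_prop : Measurable (fun ω => Real.exp (-s * Y ω))).aestronglyMeasurable
  · filter_upwards with ω
    rw [Real.norm_eq_abs, abs_of_pos (Real.exp_pos _)]
    exact Real.exp_le_one_iff.2 (by nlinarith [h0 ω])

lemma mul_exp_integrable (Y : Ω → ℝ) (hm : Measurable Y) (h0 : ∀ ω, 0 ≤ Y ω)
    (hint : Integrable Y P) {s : ℝ} (hs : 0 ≤ s) :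
    Integrable (fun ω => Y ω * Real.exp (-s * Y ω)) P := by
  refine hint.mono' ?_ ?_
  · exact (by fun_prop : Measurable (fun ω => Y ω * Real.exp (-s * Y ω))).aestronglyMeasurable
  · filter_upwards with ω
    rw [Real.norm_eq_abs, abs_mul, abs_of_pos (Real.exp_pos _), abs_of_nonneg (h0 ω)]
    nlinarith [Real.exp_le_one_iff.2 (show -s * Y ω ≤ 0 by nlinarith [h0 ω]), h0 ω,
      Real.exp_pos (-s * Y ω)]

lemma psi_nonneg (Y : Ω → ℝ) (h0 : ∀ ω, 0 ≤ Y ω) (s : ℝ) :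
    0 ≤ ∫ ω, Y ω * Real.exp (-s * Y ω) ∂P :=
  integral_nonneg fun ω => mul_nonneg (h0 ω) (Real.exp_pos _).le

lemma psi_le (Y : Ω → ℝ) (hm : Measurable Y) (h0 : ∀ ω, 0 ≤ Y ω)
    (hint : Integrable Y P) {s : ℝ} (hs : 0 ≤ s) :
    ∫ ω, Y ω * Real.exp (-s * Y ω) ∂P ≤ ∫ ω, Y ω ∂P := by
  refine integral_mono (mul_exp_integrable Y hm h0 hint hs) hint fun ω => ?_
  nlinarith [Real.exp_le_one_iff.2 (show -s * Y ω ≤ 0 by nlinarith [h0 ω]), h0 ω,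
    Real.exp_pos (-s * Y ω)]

lemma hasDerivAt_phi (Y : Ω → ℝ) (hm : Measurable Y) (h0 : ∀ ω, 0 ≤ Y ω)
    (hint : Integrable Y P) {s : ℝ} (hs : 0 < s) :
    HasDerivAt (fun t => ∫ ω, Real.exp (-t * Y ω) ∂P)
      (∫ ω, -(Y ω * Real.exp (-s * Y ω)) ∂P) s := by
  refine (hasDerivAt_integral_of_dominated_loc_of_deriv_le (F := fun t ω => Real.exp (-t * Y ω))
    (F' := fun t ω => -(Y ω * Real.exp (-t * Y ω))) (bound := Y)
    (Metric.ball_mem_nhds s (half_pos hs)) ?_ (exp_integrable Y hm h0 hs.le) ?_ ?_ hint ?_).2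
  · filter_upwards with t
    exact (by fun_prop : Measurable (fun ω => Real.exp (-t * Y ω))).aestronglyMeasurable
  · exact (by fun_prop : Measurable (fun ω => -(Y ω * Real.exp (-s * Y ω)))).aestronglyMeasurable
  · filter_upwards with ω t ht
    have ht' : 0 < t := by
      have := abs_lt.1 (by simpa [Real.dist_eq] using Metric.mem_ball.1 ht)
      linarith [this.1]
    rw [norm_neg, Real.norm_eq_abs, abs_mul, abs_of_pos (Real.exp_pos _),
      abs_of_nonneg (h0 ω)]
    nlinarith [Real.exp_le_one_iff.2 (show -t * Y ω ≤ 0 by nlinarith [h0 ω]), h0 ω,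
      Real.exp_pos (-t * Y ω)]
  · filter_upwards with ω t ht
    have h1 : HasDerivAt (fun u : ℝ => -u * Y ω) (-Y ω) t := by
      exact ((hasDerivAt_id t).neg.mul_const (Y ω)).congr_deriv (by ring)
    have := h1.exp
    exact this.congr_deriv (by ring)

lemma phi_continuousOn (Y : Ω → ℝ) (hm : Measurable Y) (h0 : ∀ ω, 0 ≤ Y ω) :
    ContinuousOn (fun t => ∫ ω, Real.exp (-t * Y ω) ∂P) (Ici (0:ℝ)) := by
  intro s hs
  refine continuousWithinAt_of_dominated (bound := fun _ => (1:ℝ)) ?_ ?_ (integrable_const 1) ?_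
  · filter_upwards with t
    exact (by fun_prop : Measurable (fun ω => Real.exp (-t * Y ω))).aestronglyMeasurable
  · filter_upwards [self_mem_nhdsWithin] with t ht
    filter_upwards with ω
    rw [Real.norm_eq_abs, abs_of_pos (Real.exp_pos _)]
    exact Real.exp_le_one_iff.2 (by nlinarith [h0 ω, mem_Ici.1 ht])
  · filter_upwards with ω
    exact (Continuous.rexp (by continuity)).continuousWithinAt

lemma psi_continuousOn (Y : Ω → ℝ) (hm : Measurable Y) (h0 : ∀ ω, 0 ≤ Y ω)
    (hint : Integrable Y P) :
    ContinuousOn (fun t => ∫ ω, Y ω * Real.exp (-t * Y ω) ∂P) (Ici (0:ℝ)) := by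
  intro s hs
  refine continuousWithinAt_of_dominated (bound := Y) ?_ ?_ hint ?_
  · filter_upwards with t
    exact (by fun_prop : Measurable (fun ω => Y ω * Real.exp (-t * Y ω))).aestronglyMeasurable
  · filter_upwards [self_mem_nhdsWithin] with t ht
    filter_upwards with ω
    rw [Real.norm_eq_abs, abs_mul, abs_of_pos (Real.exp_pos _), abs_of_nonneg (h0 ω)]
    nlinarith [Real.exp_le_one_iff.2 (show -t * Y ω ≤ 0 by nlinarith [h0 ω, mem_Ici.1 ht]),
      h0 ω, Real.exp_pos (-t * Y ω)]
  · filter_upwards with ω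
    exact (Continuous.mul continuous_const (Continuous.rexp (by continuity))).continuousWithinAt

/-- The key identity: `φ(l) = 1 - ∫₀ˡ ψ(s) ds`. -/
lemma phi_eq (Y : Ω → ℝ) (hm : Measurable Y) (h0 : ∀ ω, 0 ≤ Y ω)
    (hint : Integrable Y P) {l : ℝ} (hl : 0 ≤ l) :
    ∫ ω, Real.exp (-l * Y ω) ∂P
      = 1 - ∫ s in (0:ℝ)..l, ∫ ω, Y ω * Real.exp (-s * Y ω) ∂P := by
  have hpsi_cont : ContinuousOn (fun t => ∫ ω, Y ω * Real.exp (-t * Y ω) ∂P) (Icc 0 l) :=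
    (psi_continuousOn Y hm h0 hint).mono Icc_subset_Ici_self
  have hFTC := intervalIntegral.integral_eq_sub_of_hasDeriv_right_of_le hl
    (f := fun t => ∫ ω, Real.exp (-t * Y ω) ∂P)
    (f' := fun s => ∫ ω, -(Y ω * Real.exp (-s * Y ω)) ∂P)
    ((phi_continuousOn Y hm h0).mono Icc_subset_Ici_self)
    (fun s hsl => (hasDerivAt_phi Y hm h0 hint hsl.1).hasDerivWithinAt)
    ?_
  · beta_reduce at hFTC
    have hneg : (∫ s in (0:ℝ)..l, ∫ ω, -(Y ω * Real.exp (-s * Y ω)) ∂P)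
        = -∫ s in (0:ℝ)..l, ∫ ω, Y ω * Real.exp (-s * Y ω) ∂P := by
      rw [← intervalIntegral.integral_neg]
      exact intervalIntegral.integral_congr fun s _ => integral_neg _
    have h0' : ∫ ω, Real.exp (-(0:ℝ) * Y ω) ∂P = 1 := by simp
    rw [hneg, h0'] at hFTC
    linarith
  · have : ContinuousOn (fun s => ∫ ω, -(Y ω * Real.exp (-s * Y ω)) ∂P) (uIcc 0 l) := by
      rw [uIcc_of_le hl]
      exact (hpsi_cont.neg).congr fun s _ => integral_neg _
    exact this.intervalIntegrable

end aux

theorem stmt_18 {Ω : Type*} [MeasureSpace Ω] (P : Measure Ω) [IsProbabilityMeasure P]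
    (X : ℕ → Ω → ℝ) (Xlim : Ω → ℝ)
    (hX_meas : ∀ n, Measurable (X n)) (hXlim_meas : Measurable Xlim)
    (hX_nonneg : ∀ n ω, 0 ≤ X n ω) (hXlim_nonneg : ∀ ω, 0 ≤ Xlim ω)
    (hX_int : ∀ n, Integrable (X n) P) (hXlim_int : Integrable Xlim P)
    (a : ℝ) (ha : 0 < a) (hX_mean : ∀ n, ∫ ω, X n ω ∂P = a)
    (hXlim_mean : ∫ ω, Xlim ω ∂P = a)
    (h_conv : ∀ l : ℝ, 0 ≤ l →
      Tendsto (fun n => (∫ ω, X n ω * Real.exp (-l * X n ω) ∂P) / a) atTop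
        (nhds ((∫ ω, Xlim ω * Real.exp (-l * Xlim ω) ∂P) / a))) :
    ∀ l : ℝ, 0 ≤ l →
      Tendsto (fun n => ∫ ω, Real.exp (-l * X n ω) ∂P) atTop
        (nhds (∫ ω, Real.exp (-l * Xlim ω) ∂P)) := by
  intro l hl
  -- rewrite via the key identity
  have hrw : ∀ n, ∫ ω, Real.exp (-l * X n ω) ∂P
      = 1 - ∫ s in (0:ℝ)..l, ∫ ω, X n ω * Real.exp (-s * X n ω) ∂P :=
    fun n => phi_eq (X n) (hX_meas n) (hX_nonneg n) (hX_int n) hl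
  have hrwl : ∫ ω, Real.exp (-l * Xlim ω) ∂P
      = 1 - ∫ s in (0:ℝ)..l, ∫ ω, Xlim ω * Real.exp (-s * Xlim ω) ∂P :=
    phi_eq Xlim hXlim_meas hXlim_nonneg hXlim_int hl
  simp only [hrw, hrwl]
  refine Tendsto.const_sub 1 ?_
  -- interval integrals as set integrals over Ioc 0 l
  have hset : ∀ (Y : Ω → ℝ), (∫ s in (0:ℝ)..l, ∫ ω, Y ω * Real.exp (-s * Y ω) ∂P)
      = ∫ s in Ioc (0:ℝ) l, ∫ ω, Y ω * Real.exp (-s * Y ω) ∂P := fun Y =>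
    intervalIntegral.integral_of_le hl
  simp only [hset]
  refine tendsto_integral_of_dominated_convergence (fun _ => a) ?_ ?_ ?_ ?_
  · intro n
    exact (((psi_continuousOn (X n) (hX_meas n) (hX_nonneg n) (hX_int n)).mono
      (Ioc_subset_Icc_self.trans Icc_subset_Ici_self)).aestronglyMeasurable measurableSet_Ioc)
  · exact (integrableOn_const measure_Ioc_lt_top.ne)
  · intro n
    rw [ae_restrict_iff' measurableSet_Ioc]
    filter_upwards with s hs
    rw [Real.norm_eq_abs, abs_of_nonneg (psi_nonneg (X n) (hX_nonneg n) s)]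
    calc ∫ ω, X n ω * Real.exp (-s * X n ω) ∂P
        ≤ ∫ ω, X n ω ∂P := psi_le (X n) (hX_meas n) (hX_nonneg n) (hX_int n) hs.1.le
      _ = a := hX_mean n
  · rw [ae_restrict_iff' measurableSet_Ioc]
    filter_upwards with s hs
    have h := (h_conv s hs.1.le).mul_const a
    have heq : ∀ (Y : Ω → ℝ), (∫ ω, Y ω * Real.exp (-s * Y ω) ∂P) / a * a
        = ∫ ω, Y ω * Real.exp (-s * Y ω) ∂P := fun Y =>
      div_mul_cancel₀ _ (ne_of_gt ha)
    simpa only [heq] using h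
end
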